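/- arXiv:1511.03607 — 3 statements merged into one kernel-verified Lean document; each statement's English description precedes it below -/
import Mathlib

section
/- Fix any r ∈ (0, 1) and any matrix X₀ ∈ ℝ^{n×p}. Over the set Γ ∩ {w : ‖w‖ ≥ r}, the function w ↦ wᵀ∇g(w; X₀)/‖w‖ is L-Lipschitz with L ≤ (2√n ‖X₀‖_∞)/r + 8 n^{3/2} ‖X₀‖_∞ + (4 n²/μ) ‖X₀‖_∞². -/
open MeasureTheory ProbabilityTheory Real Matrix
open scoped RealInnerProductSpace ENNReal NNReal

noncomputable section

/-- The Bernoulli–Gaussian law `BG(θ)`: with probability `θ` a standard Gaussian,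
with probability `1-θ` a point mass at `0`. -/
def bg (θ : ℝ) : Measure ℝ :=
  θ.toNNReal • gaussianReal 0 1 + (1 - θ).toNNReal • Measure.dirac 0

instance bg.instIsFiniteMeasure (θ : ℝ) : IsFiniteMeasure (bg θ) := by
  unfold bg; infer_instance

/-- Law of an `n × p` matrix with i.i.d. `BG(θ)` entries. -/
def bgMatrix (θ : ℝ) (n p : ℕ) : Measure (Fin n → Fin p → ℝ) :=
  Measure.pi fun _ => Measure.pi fun _ => bg θ

/-- Law of a vector in `ℝ^n` with i.i.d. `BG(θ)` entries. -/
def bgVec (θ : ℝ) (n : ℕ) : Measure (Fin n → ℝ) :=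
  Measure.pi fun _ => bg θ

/-- The smooth sparsity surrogate `h_μ(z) = μ log cosh (z/μ)`. -/
def hmu (μ z : ℝ) : ℝ := μ * Real.log (Real.cosh (z / μ))

/-- Reparametrization `q(w) = (w, √(1-‖w‖²))` with `w` in the unit ball of `ℝ^{n-1}`. -/
def qmap (n : ℕ) (w : EuclideanSpace ℝ (Fin (n - 1))) : Fin n → ℝ :=
  fun i => if h : (i : ℕ) < n - 1 then w ⟨i, h⟩ else Real.sqrt (1 - ‖w‖ ^ 2)

/-- `f(q; Y) = (1/p) ∑ₖ h_μ(qᵀ yₖ)`. -/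
def ffun (n p : ℕ) (μ : ℝ) (Y : Matrix (Fin n) (Fin p) ℝ)
    (q : EuclideanSpace ℝ (Fin n)) : ℝ :=
  (p : ℝ)⁻¹ * ∑ k : Fin p, hmu μ (∑ i : Fin n, q i * Y i k)

/-- `g(w; Y) = f(q(w); Y)`. -/
def gfun (n p : ℕ) (μ : ℝ) (Y : Matrix (Fin n) (Fin p) ℝ)
    (w : EuclideanSpace ℝ (Fin (n - 1))) : ℝ :=
  (p : ℝ)⁻¹ * ∑ k : Fin p, hmu μ (∑ i : Fin n, qmap n w i * Y i k)

/-- Gradient `∇g(w; Y)` in `w`. -/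
def gradg (n p : ℕ) (μ : ℝ) (Y : Matrix (Fin n) (Fin p) ℝ)
    (w : EuclideanSpace ℝ (Fin (n - 1))) : EuclideanSpace ℝ (Fin (n - 1)) :=
  gradient (gfun n p μ Y) w

/-- Hessian `∇²g(w; Y)` in `w`, as a continuous linear map. -/
def hessg (n p : ℕ) (μ : ℝ) (Y : Matrix (Fin n) (Fin p) ℝ)
    (w : EuclideanSpace ℝ (Fin (n - 1))) :
    EuclideanSpace ℝ (Fin (n - 1)) →L[ℝ] EuclideanSpace ℝ (Fin (n - 1)) :=
  fderiv ℝ (gradg n p μ Y) w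

/-- The set `Γ = {w : ‖w‖ < √((4n-1)/(4n))}`. -/
def GammaSet (n : ℕ) : Set (EuclideanSpace ℝ (Fin (n - 1))) :=
  {w | ‖w‖ < Real.sqrt ((4 * (n : ℝ) - 1) / (4 * n))}

/-- Spectral (`ℓ²→ℓ²` operator) norm of а matrix. -/
def specNorm {m k : ℕ} (M : Matrix (Fin m) (Fin k) ℝ) : ℝ :=
  ‖LinearMap.toContinuousLinearMap (Matrix.toEuclideanLin M)‖

/-- Largest magnitude of an entry of a matrix. -/
def Minf {m k : ℕ} (M : Matrix (Fin m) (Fin k) ℝ) : ℝ := ⨆ i, ⨆ j, |M i j|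

/-- Condition number: ratio of largest to smallest singular value. -/
def kappa {n : ℕ} (s : Fin n → ℝ) : ℝ := (⨆ i, s i) / (⨅ i, s i)

/-- Signed standard basis vectors `{± e_i}` of `ℝ^n`. -/
def SignedBasis (n : ℕ) : Set (EuclideanSpace ℝ (Fin n)) :=
  {b | ∃ i : Fin n, b = EuclideanSpace.single i (1 : ℝ) ∨ b = -EuclideanSpace.single i (1 : ℝ)}

/-- Set of local minimizers of `f(·; Y)` over the unit sphere `S^{n-1}`. -/
def LocalMins (n p : ℕ) (μ : ℝ) (Y : Matrix (Fin n) (Fin p) ℝ) :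
    Set (EuclideanSpace ℝ (Fin n)) :=
  {q | q ∈ Metric.sphere (0 : EuclideanSpace ℝ (Fin n)) 1 ∧
       IsLocalMinOn (ffun n p μ Y) (Metric.sphere (0 : EuclideanSpace ℝ (Fin n)) 1) q}

/-- Expected objective `E_x[h_μ(q(w)ᵀ x)]` for `x` with i.i.d. `BG(θ)` entries. -/
def Gexp (n : ℕ) (θ μ : ℝ) (w : EuclideanSpace ℝ (Fin (n - 1))) : ℝ :=
  ∫ x, hmu μ (∑ i : Fin n, qmap n w i * x i) ∂(bgVec θ n)

namespace St11

/- ### elementary 1-d lemmas -/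

lemma abs_tanh_le_one (x : ℝ) : |Real.tanh x| ≤ 1 := by
  rw [Real.tanh_eq_sinh_div_cosh, abs_div, abs_of_pos (Real.cosh_pos x),
    div_le_one (Real.cosh_pos x)]
  rw [Real.abs_sinh, ← Real.cosh_abs]
  exact (Real.sinh_lt_cosh _).le

lemma hasDerivAt_tanh (x : ℝ) : HasDerivAt Real.tanh (1 / Real.cosh x ^ 2) x := by
  have h : HasDerivAt (fun x => Real.sinh x / Real.cosh x)
      ((Real.cosh x * Real.cosh x - Real.sinh x * Real.sinh x) / Real.cosh x ^ 2) x :=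
    (Real.hasDerivAt_sinh x).div (Real.hasDerivAt_cosh x) (Real.cosh_pos x).ne'
  have e : (Real.cosh x * Real.cosh x - Real.sinh x * Real.sinh x) = 1 := by
    have := Real.cosh_sq_sub_sinh_sq x; nlinarith
  rw [e] at h
  exact (funext Real.tanh_eq_sinh_div_cosh : Real.tanh = _) ▸ h

lemma tanh_lipschitz (x y : ℝ) : |Real.tanh x - Real.tanh y| ≤ |x - y| := by
  have := Convex.norm_image_sub_le_of_norm_hasDerivWithin_le
    (f := Real.tanh) (f' := fun x => 1 / Real.cosh x ^ 2) (s := Set.univ) (C := 1)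
    (fun z _ => (hasDerivAt_tanh z).hasDerivWithinAt)
    (fun z _ => by
      rw [Real.norm_eq_abs, abs_of_pos (by positivity)]
      rw [div_le_one (by positivity)]
      nlinarith [Real.one_le_cosh z])
    convex_univ (Set.mem_univ y) (Set.mem_univ x)
  simpa [Real.norm_eq_abs] using this

lemma sigma_hasDerivAt {t : ℝ} (ht : t^2 < 1) :
    HasDerivAt (fun t : ℝ => √(1-t^2)) (-t / √(1-t^2)) t := by
  have h1 : HasDerivAt (fun t : ℝ => 1 - t^2) (-(2*t)) t := by
    simpa using ((hasDerivAt_pow 2 t).const_sub 1)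
  have h2 := (Real.hasDerivAt_sqrt (by nlinarith : (1:ℝ) - t^2 ≠ 0)).comp t h1
  refine h2.congr_deriv ?_
  symm
  have hs : √(1-t^2) > 0 := Real.sqrt_pos.mpr (by nlinarith)
  field_simp

lemma rho_hasDerivAt {t : ℝ} (ht : t^2 < 1) :
    HasDerivAt (fun t : ℝ => t / √(1-t^2)) (1 / (√(1-t^2))^3) t := by
  have hs : √(1-t^2) > 0 := Real.sqrt_pos.mpr (by nlinarith)
  have hsq : √(1-t^2) ^ 2 = 1 - t^2 := Real.sq_sqrt (by nlinarith)
  have h := (hasDerivAt_id t).div (sigma_hasDerivAt ht) hs.ne'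
  refine h.congr_deriv ?_
  symm
  have e1 : 1 * √(1-t^2) - id t * (-t / √(1-t^2)) = 1 / √(1-t^2) := by
    field_simp
    simp only [id]; nlinarith [hsq]
  rw [e1, div_div, ← pow_succ']

lemma sigma_lip {R K : ℝ} (hR0 : 0 ≤ R) (hR : R^2 < 1)
    (hK : R / √(1-R^2) ≤ K) {t t' : ℝ} (ht : t ∈ Set.Icc 0 R) (ht' : t' ∈ Set.Icc 0 R) :
    |√(1-t^2) - √(1-t'^2)| ≤ K * |t - t'| := by
  have hsR : 0 < √(1-R^2) := Real.sqrt_pos.mpr (by nlinarith)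
  have key : ∀ x ∈ Set.Icc (0:ℝ) R, ‖-x / √(1-x^2)‖ ≤ K := by
    intro x hx
    obtain ⟨hx0, hxR⟩ := hx
    have hx1 : x^2 < 1 := by nlinarith
    have hs : 0 < √(1-x^2) := Real.sqrt_pos.mpr (by nlinarith)
    have hmono : √(1-R^2) ≤ √(1-x^2) := Real.sqrt_le_sqrt (by nlinarith)
    rw [Real.norm_eq_abs, abs_div, abs_neg, abs_of_nonneg hx0, abs_of_pos hs]
    calc x / √(1-x^2) ≤ R / √(1-R^2) := div_le_div₀ hR0 hxR hsR hmono
    _ ≤ K := hK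
  have := Convex.norm_image_sub_le_of_norm_hasDerivWithin_le
    (f := fun t : ℝ => √(1-t^2)) (f' := fun t => -t / √(1-t^2)) (s := Set.Icc 0 R) (C := K)
    (fun x hx => (sigma_hasDerivAt (by nlinarith [hx.1, hx.2] : x^2 < 1)).hasDerivWithinAt)
    key (convex_Icc 0 R) ht' ht
  simpa [Real.norm_eq_abs] using this

lemma rho_lip {R K : ℝ} (hR0 : 0 ≤ R) (hR : R^2 < 1)
    (hK : 1 / (√(1-R^2))^3 ≤ K) {t t' : ℝ} (ht : t ∈ Set.Icc 0 R) (ht' : t' ∈ Set.Icc 0 R) :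
    |t/√(1-t^2) - t'/√(1-t'^2)| ≤ K * |t - t'| := by
  have hsR : 0 < √(1-R^2) := Real.sqrt_pos.mpr (by nlinarith)
  have key : ∀ x ∈ Set.Icc (0:ℝ) R, ‖1 / (√(1-x^2))^3‖ ≤ K := by
    intro x hx
    obtain ⟨hx0, hxR⟩ := hx
    have hx1 : x^2 < 1 := by nlinarith
    have hs : 0 < √(1-x^2) := Real.sqrt_pos.mpr (by nlinarith)
    have hmono : √(1-R^2) ≤ √(1-x^2) := Real.sqrt_le_sqrt (by nlinarith)
    rw [Real.norm_eq_abs, abs_of_pos (by positivity)]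
    calc 1 / (√(1-x^2))^3 ≤ 1 / (√(1-R^2))^3 := by
          apply one_div_le_one_div_of_le (by positivity)
          exact pow_le_pow_left₀ hsR.le hmono 3
    _ ≤ K := hK
  have := Convex.norm_image_sub_le_of_norm_hasDerivWithin_le
    (f := fun t : ℝ => t/√(1-t^2)) (f' := fun t => 1/(√(1-t^2))^3) (s := Set.Icc 0 R) (C := K)
    (fun x hx => (rho_hasDerivAt (by nlinarith [hx.1, hx.2] : x^2 < 1)).hasDerivWithinAt)
    key (convex_Icc 0 R) ht' ht
  simpa [Real.norm_eq_abs] using this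

lemma unit_lip {E : Type*} [NormedAddCommGroup E] [InnerProductSpace ℝ E]
    {r : ℝ} (hr : 0 < r) {w w' : E} (hw : r ≤ ‖w‖) (hw' : r ≤ ‖w'‖) :
    ‖‖w‖⁻¹ • w - ‖w'‖⁻¹ • w'‖ ≤ 2 / r * ‖w - w'‖ := by
  have hw0 : 0 < ‖w‖ := lt_of_lt_of_le hr hw
  have hw'0 : 0 < ‖w'‖ := lt_of_lt_of_le hr hw'
  have e : ‖w‖⁻¹ • w - ‖w'‖⁻¹ • w' = ‖w‖⁻¹ • (w - w') + (‖w‖⁻¹ - ‖w'‖⁻¹) • w' := by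
    rw [smul_sub, sub_smul]; abel
  have e2 : |‖w‖⁻¹ - ‖w'‖⁻¹| = |‖w'‖ - ‖w‖| / (‖w‖ * ‖w'‖) := by
    rw [inv_sub_inv hw0.ne' hw'0.ne', abs_div, abs_of_pos (mul_pos hw0 hw'0)]
  have e3 : |‖w'‖ - ‖w‖| ≤ ‖w - w'‖ := by
    rw [abs_sub_comm]; exact abs_norm_sub_norm_le w w'
  have h1 : ‖w‖⁻¹ * ‖w - w'‖ ≤ r⁻¹ * ‖w - w'‖ :=
    mul_le_mul_of_nonneg_right (inv_anti₀ hr hw) (norm_nonneg _)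
  have h2 : |‖w‖⁻¹ - ‖w'‖⁻¹| * ‖w'‖ ≤ r⁻¹ * ‖w - w'‖ := by
    rw [e2, div_mul_eq_mul_div]
    have e4 : |‖w'‖ - ‖w‖| * ‖w'‖ / (‖w‖ * ‖w'‖) = |‖w'‖ - ‖w‖| / ‖w‖ := by
      field_simp
    rw [e4, inv_mul_eq_div]
    exact div_le_div₀ (norm_nonneg _) e3 hr hw
  rw [e]
  calc ‖‖w‖⁻¹ • (w - w') + (‖w‖⁻¹ - ‖w'‖⁻¹) • w'‖
      ≤ ‖‖w‖⁻¹ • (w - w')‖ + ‖(‖w‖⁻¹ - ‖w'‖⁻¹) • w'‖ := norm_add_le _ _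
    _ = ‖w‖⁻¹ * ‖w - w'‖ + |‖w‖⁻¹ - ‖w'‖⁻¹| * ‖w'‖ := by
        rw [norm_smul, norm_smul, Real.norm_eq_abs, Real.norm_eq_abs,
          abs_of_pos (by positivity : (0:ℝ) < ‖w‖⁻¹)]
    _ ≤ r⁻¹ * ‖w - w'‖ + r⁻¹ * ‖w - w'‖ := add_le_add h1 h2
    _ = 2 / r * ‖w - w'‖ := by ring

lemma abs_le_Minf {q s : ℕ} (M : Matrix (Fin q) (Fin s) ℝ) (i : Fin q) (j : Fin s) :
    |M i j| ≤ Minf M := by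
  have h1 : |M i j| ≤ ⨆ j', |M i j'| :=
    le_ciSup (f := fun j' => |M i j'|) (Set.finite_range _).bddAbove j
  exact h1.trans
    (le_ciSup (f := fun i => ⨆ j', |M i j'|) (Set.finite_range _).bddAbove i)

lemma Minf_nonneg {q s : ℕ} (M : Matrix (Fin q) (Fin s) ℝ) : 0 ≤ Minf M := by
  rcases Nat.eq_zero_or_pos q with hq | hq
  · subst hq
    simp [Minf, Real.iSup_of_isEmpty]
  rcases Nat.eq_zero_or_pos s with hs | hs
  · subst hs
    have he : Minf M = ⨆ i : Fin q, (0:ℝ) := by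
      unfold Minf
      congr 1; funext i; exact Real.iSup_of_isEmpty _
    have : Nonempty (Fin q) := ⟨⟨0, hq⟩⟩
    rw [he, ciSup_const]
  · exact (abs_nonneg _).trans (abs_le_Minf M ⟨0, hq⟩ ⟨0, hs⟩)

lemma euclid_norm_le {m : ℕ} (x : EuclideanSpace ℝ (Fin m)) {M : ℝ} (hM : 0 ≤ M)
    (h : ∀ i, |x i| ≤ M) : ‖x‖ ≤ Real.sqrt m * M := by
  rw [EuclideanSpace.norm_eq]
  have h1 : ∑ i, x i ^ 2 ≤ (m : ℝ) * M ^ 2 := by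
    calc ∑ i, x i ^ 2 ≤ ∑ _i : Fin m, M ^ 2 :=
          Finset.sum_le_sum fun i _ => by
            rw [← sq_abs]; exact pow_le_pow_left₀ (abs_nonneg _) (h i) 2
      _ = (m : ℝ) * M ^ 2 := by simp [mul_comm]
  calc Real.sqrt (∑ i, ‖x i‖ ^ 2) = Real.sqrt (∑ i, x i ^ 2) := by
        simp [Real.norm_eq_abs, sq_abs]
    _ ≤ Real.sqrt ((m : ℝ) * M ^ 2) := Real.sqrt_le_sqrt h1
    _ = Real.sqrt m * M := by
        rw [Real.sqrt_mul (Nat.cast_nonneg m), Real.sqrt_sq hM]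

/- ### structure of `g` and its gradient -/

variable {m p : ℕ} {μ : ℝ}

def avec (Y : Matrix (Fin (m+1)) (Fin p) ℝ) (k : Fin p) : EuclideanSpace ℝ (Fin m) :=
  WithLp.toLp 2 (fun i : Fin m => Y i.castSucc k)

def sfun (w : EuclideanSpace ℝ (Fin m)) : ℝ := Real.sqrt (1 - ‖w‖ ^ 2)

def uk (Y : Matrix (Fin (m+1)) (Fin p) ℝ) (k : Fin p) (w : EuclideanSpace ℝ (Fin m)) : ℝ :=
  ⟪avec Y k, w⟫ + Y (Fin.last m) k * sfun w

lemma qmap_castSucc (w : EuclideanSpace ℝ (Fin m)) (i : Fin m) :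
    qmap (m+1) w i.castSucc = w i := by
  have h : ((i.castSucc : Fin (m+1)) : ℕ) < m + 1 - 1 := by simpa using i.isLt
  simp only [qmap, dif_pos h]
  rfl

lemma qmap_last (w : EuclideanSpace ℝ (Fin m)) :
    qmap (m+1) w (Fin.last m) = sfun w := by
  have h : ¬ ((Fin.last m : ℕ) < m + 1 - 1) := by simp
  simp only [qmap, dif_neg h]; rfl

lemma sum_split (Y : Matrix (Fin (m+1)) (Fin p) ℝ) (k : Fin p) (w : EuclideanSpace ℝ (Fin m)) :
    ∑ i : Fin (m+1), qmap (m+1) w i * Y i k = uk Y k w := by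
  rw [Fin.sum_univ_castSucc]
  rw [uk]
  congr 1
  · rw [PiLp.inner_apply]
    apply Finset.sum_congr rfl
    intro i _
    rw [qmap_castSucc]
    simp [avec, RCLike.inner_apply, conj_trivial, mul_comm]
  · rw [qmap_last]; ring

lemma gfun_eq (Y : Matrix (Fin (m+1)) (Fin p) ℝ) :
    gfun (m+1) p μ Y = fun w => (p : ℝ)⁻¹ * ∑ k : Fin p, hmu μ (uk Y k w) := by
  funext w
  rw [gfun]
  congr 1
  exact Finset.sum_congr rfl fun k _ => by rw [sum_split]

lemma hasFDerivAt_sfun (w : EuclideanSpace ℝ (Fin m)) (hw : ‖w‖ < 1) :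
    HasFDerivAt (sfun : EuclideanSpace ℝ (Fin m) → ℝ) ((-(sfun w)⁻¹) • innerSL ℝ w) w := by
  have h1 : HasFDerivAt (fun w : EuclideanSpace ℝ (Fin m) => 1 - ‖w‖^2)
      (-(2 • innerSL ℝ w)) w :=
    ((hasStrictFDerivAt_norm_sq w).hasFDerivAt).const_sub 1
  have hpos : 0 < 1 - ‖w‖^2 := by nlinarith [norm_nonneg w]
  have h2 := (Real.hasDerivAt_sqrt hpos.ne').comp_hasFDerivAt w h1
  have hs : 0 < sfun w := Real.sqrt_pos.mpr hpos
  refine h2.congr_fderiv ?_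
  symm
  ext v
  simp only [ContinuousLinearMap.coe_smul', Pi.smul_apply, ContinuousLinearMap.neg_apply,
    smul_eq_mul, ContinuousLinearMap.smul_apply]
  have : Real.sqrt (1 - ‖w‖^2) = sfun w := rfl
  rw [this]
  field_simp
  ring

lemma hasFDerivAt_uk (Y : Matrix (Fin (m+1)) (Fin p) ℝ) (k : Fin p)
    (w : EuclideanSpace ℝ (Fin m)) (hw : ‖w‖ < 1) :
    HasFDerivAt (uk Y k)
      (innerSL ℝ (avec Y k) + (Y (Fin.last m) k * (-(sfun w)⁻¹)) • innerSL ℝ w) w := by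
  have h1 : HasFDerivAt (fun w : EuclideanSpace ℝ (Fin m) => ⟪avec Y k, w⟫)
      (innerSL ℝ (avec Y k)) w := (innerSL ℝ (avec Y k)).hasFDerivAt
  have h2 := (hasFDerivAt_sfun w hw).const_mul (Y (Fin.last m) k)
  have h3 := h1.add h2
  refine h3.congr_fderiv ?_
  symm
  rw [smul_smul]

lemma hasDerivAt_hmu (hμ : 0 < μ) (z : ℝ) : HasDerivAt (hmu μ) (Real.tanh (z / μ)) z := by
  have hc : HasDerivAt (fun z : ℝ => Real.cosh (z / μ)) (Real.sinh (z / μ) * (1 / μ)) z :=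
    by have := (Real.hasDerivAt_cosh (z / μ)).comp z ((hasDerivAt_id' z).div_const μ); exact this
  have hl := (hc.log (Real.cosh_pos _).ne').const_mul μ
  refine hl.congr_deriv ?_
  symm
  rw [Real.tanh_eq_sinh_div_cosh]
  field_simp

def Dmap (μ : ℝ) (Y : Matrix (Fin (m+1)) (Fin p) ℝ) (w : EuclideanSpace ℝ (Fin m)) :
    EuclideanSpace ℝ (Fin m) →L[ℝ] ℝ :=
  (p:ℝ)⁻¹ • ∑ k : Fin p, Real.tanh (uk Y k w / μ) •
    (innerSL ℝ (avec Y k) + (Y (Fin.last m) k * (-(sfun w)⁻¹)) • innerSL ℝ w)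

lemma hasFDerivAt_gfun (hμ : 0 < μ) (Y : Matrix (Fin (m+1)) (Fin p) ℝ)
    (w : EuclideanSpace ℝ (Fin m)) (hw : ‖w‖ < 1) :
    HasFDerivAt (gfun (m+1) p μ Y) (Dmap μ Y w) w := by
  rw [gfun_eq]
  have hk : ∀ k : Fin p, HasFDerivAt (fun w => hmu μ (uk Y k w))
      (Real.tanh (uk Y k w / μ) •
        (innerSL ℝ (avec Y k) + (Y (Fin.last m) k * (-(sfun w)⁻¹)) • innerSL ℝ w)) w :=
    fun k => (hasDerivAt_hmu hμ (uk Y k w)).comp_hasFDerivAt w (hasFDerivAt_uk Y k w hw)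
  exact (HasFDerivAt.fun_sum (fun k _ => hk k)).const_mul ((p:ℝ)⁻¹)

lemma inner_w_gradg (hμ : 0 < μ) (Y : Matrix (Fin (m+1)) (Fin p) ℝ)
    (w : EuclideanSpace ℝ (Fin m)) (hw : ‖w‖ < 1) :
    ⟪w, gradg (m+1) p μ Y w⟫ = (p:ℝ)⁻¹ * ∑ k : Fin p, Real.tanh (uk Y k w / μ) *
      (⟪avec Y k, w⟫ + Y (Fin.last m) k * (-(sfun w)⁻¹) * ‖w‖^2) := by
  have hD := hasFDerivAt_gfun hμ Y w hw
  have h1 : gradg (m+1) p μ Y w = (InnerProductSpace.toDual ℝ _).symm (Dmap μ Y w) := by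
    rw [gradg, gradient, hD.fderiv]; rfl
  rw [h1, real_inner_comm, InnerProductSpace.toDual_symm_apply]
  simp only [Dmap, ContinuousLinearMap.smul_apply, ContinuousLinearMap.sum_apply,
    ContinuousLinearMap.add_apply, innerSL_apply_apply, smul_eq_mul, real_inner_self_eq_norm_sq]


def Afun (μ : ℝ) (Y : Matrix (Fin (m+1)) (Fin p) ℝ) (k : Fin p)
    (v : EuclideanSpace ℝ (Fin m)) : ℝ := Real.tanh (uk Y k v / μ)

def Bfun (Y : Matrix (Fin (m+1)) (Fin p) ℝ) (k : Fin p)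
    (v : EuclideanSpace ℝ (Fin m)) : ℝ :=
  ⟪avec Y k, ‖v‖⁻¹ • v⟫ - Y (Fin.last m) k * (‖v‖ / sfun v)

lemma value_eq (hμ : 0 < μ) (Y : Matrix (Fin (m+1)) (Fin p) ℝ)
    (v : EuclideanSpace ℝ (Fin m)) (hv0 : 0 < ‖v‖) (hv1 : ‖v‖ < 1) :
    ⟪v, gradg (m+1) p μ Y v⟫ / ‖v‖ = (p:ℝ)⁻¹ * ∑ k : Fin p, Afun μ Y k v * Bfun Y k v := by
  have hs0 : 0 < sfun v := Real.sqrt_pos.mpr (by nlinarith [norm_nonneg v])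
  rw [inner_w_gradg hμ Y v hv1, mul_div_assoc, Finset.sum_div]
  congr 1
  apply Finset.sum_congr rfl
  intro k _
  rw [Afun, Bfun, real_inner_smul_right]
  field_simp
  ring


set_option maxHeartbeats 2000000 in
theorem aux_main (m p : ℕ) (hm : 1 ≤ m) (μ r : ℝ) (hμ : 0 < μ) (hr : r ∈ Set.Ioo (0 : ℝ) 1)
    (X₀ : Matrix (Fin (m+1)) (Fin p) ℝ) :
    ∀ w ∈ GammaSet (m+1) ∩ {w | r ≤ ‖w‖}, ∀ w' ∈ GammaSet (m+1) ∩ {w | r ≤ ‖w‖},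
      |⟪w, gradg (m+1) p μ X₀ w⟫ / ‖w‖ - ⟪w', gradg (m+1) p μ X₀ w'⟫ / ‖w'‖| ≤
        (2 * Real.sqrt ((m+1 : ℕ)) * Minf X₀ / r +
         8 * ((m+1 : ℕ) : ℝ) ^ ((3 : ℝ) / 2) * Minf X₀ +
         4 * ((m+1 : ℕ) : ℝ) ^ 2 / μ * Minf X₀ ^ 2) * ‖w - w'‖ := by
  intro w hw w' hw'
  obtain ⟨hwΓ, hwr⟩ := hw
  obtain ⟨hw'Γ, hw'r⟩ := hw'
  have hr0 : 0 < r := hr.1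
  have hM0 : 0 ≤ Minf X₀ := Minf_nonneg X₀
  set M := Minf X₀ with hM
  have hN2 : (2:ℝ) ≤ ((m+1:ℕ):ℝ) := by exact_mod_cast Nat.succ_le_succ hm
  set N : ℝ := ((m+1:ℕ):ℝ) with hN
  have hN0 : 0 < N := by linarith
  set R : ℝ := Real.sqrt ((4*N-1)/(4*N)) with hRdef
  have hwR : ‖w‖ < R := hwΓ
  have hw'R : ‖w'‖ < R := hw'Γ
  have hfr : 0 ≤ (4*N-1)/(4*N) := div_nonneg (by linarith) (by linarith)
  have hR2 : R^2 = (4*N-1)/(4*N) := Real.sq_sqrt hfr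
  have hR0 : 0 ≤ R := Real.sqrt_nonneg _
  have hck : ∀ k, |X₀ (Fin.last m) k| ≤ M := fun k => abs_le_Minf X₀ _ _
  have ham : ∀ k, ‖avec X₀ k‖ ≤ Real.sqrt m * M := fun k =>
    euclid_norm_le _ hM0 (fun i => abs_le_Minf X₀ _ _)
  clear_value M N R
  have hR2lt1 : R^2 < 1 := by rw [hR2, div_lt_one (by linarith)]; linarith
  have hRle1 : R ≤ 1 := by nlinarith
  have h1mR2 : 1 - R^2 = (4*N)⁻¹ := by rw [hR2]; field_simp; ring
  have hsqN : 0 < Real.sqrt N := Real.sqrt_pos.mpr hN0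
  have hsqN2 : (Real.sqrt N)^2 = N := Real.sq_sqrt hN0.le
  have hs1mR2 : Real.sqrt (1-R^2) = (2*Real.sqrt N)⁻¹ := by
    rw [h1mR2, show (4*N) = (2*Real.sqrt N)^2 by nlinarith [hsqN2], Real.sqrt_inv,
      Real.sqrt_sq (by positivity)]
  have hsR : 0 < Real.sqrt (1-R^2) := Real.sqrt_pos.mpr (by nlinarith)
  have hKs : R / Real.sqrt (1-R^2) ≤ 2*Real.sqrt N := by
    rw [hs1mR2]
    have e : R / (2*Real.sqrt N)⁻¹ = R * (2*Real.sqrt N) := by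
      rw [div_eq_mul_inv, inv_inv]
    rw [e]
    nlinarith [hsqN, mul_nonneg (sub_nonneg.mpr hRle1) hsqN.le]
  have hKr : 1 / (Real.sqrt (1-R^2))^3 ≤ 8*(N*Real.sqrt N) := by
    rw [hs1mR2, inv_pow, one_div, inv_inv]
    have e : (2*Real.sqrt N)^3 = 8*(N*Real.sqrt N) := by
      linear_combination (8*Real.sqrt N) * hsqN2
    exact e.le
  -- bounds on sfun and the ratio on the annulus
  have hsfun : ∀ v : EuclideanSpace ℝ (Fin m), ‖v‖ ≤ R →
      0 < sfun v ∧ ‖v‖ / sfun v ≤ 2*Real.sqrt N := by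
    intro v hv
    have hv2 : ‖v‖^2 ≤ R^2 := by nlinarith [norm_nonneg v]
    have hp : 0 < 1 - ‖v‖^2 := by nlinarith
    have h1 : Real.sqrt (1-R^2) ≤ Real.sqrt (1-‖v‖^2) := Real.sqrt_le_sqrt (by nlinarith)
    have h3 : 0 < sfun v := Real.sqrt_pos.mpr hp
    refine ⟨h3, ?_⟩
    calc ‖v‖ / sfun v ≤ R / Real.sqrt (1-R^2) := div_le_div₀ hR0 hv hsR h1
      _ ≤ 2*Real.sqrt N := hKs
  -- entry bounds
  have hsmN : Real.sqrt (m:ℝ) ≤ Real.sqrt N := by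
    apply Real.sqrt_le_sqrt
    rw [hN]; push_cast; linarith
  have haN : ∀ k, ‖avec X₀ k‖ ≤ Real.sqrt N * M := fun k =>
    (ham k).trans (mul_le_mul_of_nonneg_right hsmN hM0)
  -- interval memberships
  have hwIcc : ‖w‖ ∈ Set.Icc (0:ℝ) R := ⟨norm_nonneg w, hwR.le⟩
  have hw'Icc : ‖w'‖ ∈ Set.Icc (0:ℝ) R := ⟨norm_nonneg w', hw'R.le⟩
  have hnn : |‖w‖ - ‖w'‖| ≤ ‖w - w'‖ := abs_norm_sub_norm_le w w'
  have hΔ0 : (0:ℝ) ≤ ‖w - w'‖ := norm_nonneg _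
  have hw0 : 0 < ‖w‖ := lt_of_lt_of_le hr0 hwr
  have hw'0 : 0 < ‖w'‖ := lt_of_lt_of_le hr0 hw'r
  -- difference of B
  have hBd : ∀ k, |Bfun X₀ k w - Bfun X₀ k w'| ≤
      (2*Real.sqrt N*M/r + 8*(N*Real.sqrt N)*M) * ‖w - w'‖ := by
    intro k
    have e : Bfun X₀ k w - Bfun X₀ k w' = ⟪avec X₀ k, ‖w‖⁻¹ • w - ‖w'‖⁻¹ • w'⟫
        - X₀ (Fin.last m) k * (‖w‖ / sfun w - ‖w'‖ / sfun w') := by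
      rw [Bfun, Bfun, inner_sub_right]; ring
    rw [e]
    have h1 : |⟪avec X₀ k, ‖w‖⁻¹ • w - ‖w'‖⁻¹ • w'⟫| ≤
        (Real.sqrt N * M) * (2/r*‖w-w'‖) := by
      calc |⟪avec X₀ k, ‖w‖⁻¹ • w - ‖w'‖⁻¹ • w'⟫|
          ≤ ‖avec X₀ k‖ * ‖‖w‖⁻¹ • w - ‖w'‖⁻¹ • w'‖ := abs_real_inner_le_norm _ _
        _ ≤ (Real.sqrt N * M) * (2/r*‖w-w'‖) :=
            mul_le_mul (haN k) (unit_lip hr0 hwr hw'r) (norm_nonneg _) (by positivity)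
    have h2 : |X₀ (Fin.last m) k * (‖w‖ / sfun w - ‖w'‖ / sfun w')| ≤
        M * (8*(N*Real.sqrt N) * ‖w-w'‖) := by
      rw [abs_mul]
      have h3 : |‖w‖ / sfun w - ‖w'‖ / sfun w'| ≤ 8*(N*Real.sqrt N) * |‖w‖-‖w'‖| :=
        rho_lip hR0 hR2lt1 hKr hwIcc hw'Icc
      have h4 : |‖w‖ / sfun w - ‖w'‖ / sfun w'| ≤ 8*(N*Real.sqrt N) * ‖w-w'‖ :=
        h3.trans (mul_le_mul_of_nonneg_left hnn (by positivity))
      exact mul_le_mul (hck k) h4 (abs_nonneg _) hM0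
    calc |⟪avec X₀ k, ‖w‖⁻¹ • w - ‖w'‖⁻¹ • w'⟫
          - X₀ (Fin.last m) k * (‖w‖ / sfun w - ‖w'‖ / sfun w')|
        ≤ |⟪avec X₀ k, ‖w‖⁻¹ • w - ‖w'‖⁻¹ • w'⟫|
          + |X₀ (Fin.last m) k * (‖w‖ / sfun w - ‖w'‖ / sfun w')| := abs_sub _ _
      _ ≤ (Real.sqrt N * M) * (2/r*‖w-w'‖) + M * (8*(N*Real.sqrt N) * ‖w-w'‖) :=
          add_le_add h1 h2
      _ = (2*Real.sqrt N*M/r + 8*(N*Real.sqrt N)*M) * ‖w - w'‖ := by ring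
  -- difference of A
  have hAd : ∀ k, |Afun μ X₀ k w - Afun μ X₀ k w'| ≤
      ((Real.sqrt m + 2*Real.sqrt N)*M/μ) * ‖w - w'‖ := by
    intro k
    have h0 := tanh_lipschitz (uk X₀ k w / μ) (uk X₀ k w' / μ)
    have e : uk X₀ k w / μ - uk X₀ k w' / μ = (uk X₀ k w - uk X₀ k w') / μ := by ring
    rw [e, abs_div, abs_of_pos hμ] at h0
    have hu : |uk X₀ k w - uk X₀ k w'| ≤ (Real.sqrt m + 2*Real.sqrt N)*M * ‖w - w'‖ := by
      have e2 : uk X₀ k w - uk X₀ k w' = ⟪avec X₀ k, w - w'⟫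
          + X₀ (Fin.last m) k * (sfun w - sfun w') := by
        rw [uk, uk, inner_sub_right]; ring
      rw [e2]
      have h1 : |⟪avec X₀ k, w - w'⟫| ≤ (Real.sqrt m * M) * ‖w - w'‖ :=
        (abs_real_inner_le_norm _ _).trans
          (mul_le_mul_of_nonneg_right (ham k) (norm_nonneg _))
      have h2 : |X₀ (Fin.last m) k * (sfun w - sfun w')| ≤ M * (2*Real.sqrt N*‖w-w'‖) := by
        rw [abs_mul]
        have h3 : |sfun w - sfun w'| ≤ 2*Real.sqrt N * |‖w‖-‖w'‖| :=
          sigma_lip hR0 hR2lt1 hKs hwIcc hw'Icc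
        have h4 : |sfun w - sfun w'| ≤ 2*Real.sqrt N * ‖w-w'‖ :=
          h3.trans (mul_le_mul_of_nonneg_left hnn (by positivity))
        exact mul_le_mul (hck k) h4 (abs_nonneg _) hM0
      calc |⟪avec X₀ k, w - w'⟫ + X₀ (Fin.last m) k * (sfun w - sfun w')|
          ≤ |⟪avec X₀ k, w - w'⟫| + |X₀ (Fin.last m) k * (sfun w - sfun w')| := abs_add_le _ _
        _ ≤ (Real.sqrt m * M) * ‖w - w'‖ + M * (2*Real.sqrt N*‖w-w'‖) := add_le_add h1 h2
        _ = (Real.sqrt m + 2*Real.sqrt N)*M * ‖w - w'‖ := by ring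
    calc |Afun μ X₀ k w - Afun μ X₀ k w'| ≤ |uk X₀ k w - uk X₀ k w'| / μ := h0
      _ ≤ ((Real.sqrt m + 2*Real.sqrt N)*M * ‖w - w'‖) / μ := by
          exact (div_le_div_iff_of_pos_right hμ).mpr hu
      _ = ((Real.sqrt m + 2*Real.sqrt N)*M/μ) * ‖w - w'‖ := by ring
  -- bound on B at w'
  have hBbd : ∀ k, |Bfun X₀ k w'| ≤ (Real.sqrt m + 2*Real.sqrt N)*M := by
    intro k
    obtain ⟨hs0, hrho⟩ := hsfun w' hw'R.le
    have hunit : ‖(‖w'‖⁻¹ • w' : EuclideanSpace ℝ (Fin m))‖ = 1 := by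
      rw [norm_smul, Real.norm_eq_abs, abs_of_pos (by positivity),
        inv_mul_cancel₀ hw'0.ne']
    have h1 : |⟪avec X₀ k, ‖w'‖⁻¹ • w'⟫| ≤ Real.sqrt m * M := by
      calc |⟪avec X₀ k, ‖w'‖⁻¹ • w'⟫| ≤ ‖avec X₀ k‖ * ‖(‖w'‖⁻¹ • w' :
            EuclideanSpace ℝ (Fin m))‖ := abs_real_inner_le_norm _ _
        _ = ‖avec X₀ k‖ := by rw [hunit, mul_one]
        _ ≤ Real.sqrt m * M := ham k
    have h2 : |X₀ (Fin.last m) k * (‖w'‖ / sfun w')| ≤ M * (2*Real.sqrt N) := by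
      rw [abs_mul]
      have h3 : |‖w'‖ / sfun w'| ≤ 2*Real.sqrt N := by
        rw [abs_of_nonneg (div_nonneg (norm_nonneg _) hs0.le)]
        exact hrho
      exact mul_le_mul (hck k) h3 (abs_nonneg _) hM0
    calc |Bfun X₀ k w'| ≤ |⟪avec X₀ k, ‖w'‖⁻¹ • w'⟫|
          + |X₀ (Fin.last m) k * (‖w'‖ / sfun w')| := abs_sub _ _
      _ ≤ Real.sqrt m * M + M * (2*Real.sqrt N) := add_le_add h1 h2
      _ = (Real.sqrt m + 2*Real.sqrt N)*M := by ring
  -- cross constant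
  have hcross : (Real.sqrt m + 2*Real.sqrt N)^2 ≤ 4*N^2 := by
    have hm1 : ((m:ℕ):ℝ) = N - 1 := by rw [hN]; push_cast; ring
    have hmm : Real.sqrt m * Real.sqrt N ≤ N - 1/2 := by
      rw [← Real.sqrt_mul (Nat.cast_nonneg m)]
      have hle : ((m:ℕ):ℝ) * N ≤ (N - 1/2)^2 := by rw [hm1]; nlinarith
      calc Real.sqrt ((m:ℝ)*N) ≤ Real.sqrt ((N-1/2)^2) := Real.sqrt_le_sqrt hle
        _ = N - 1/2 := Real.sqrt_sq (by linarith)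
    have hsm2 : (Real.sqrt (m:ℝ))^2 = (m:ℝ) := Real.sq_sqrt (Nat.cast_nonneg m)
    nlinarith [Real.sqrt_nonneg (m:ℝ), hsqN, hmm, hsm2, hsqN2, hm1, hN2]
  -- per-k bound
  have hrpow : N ^ ((3:ℝ)/2) = N * Real.sqrt N := by
    rw [show (3:ℝ)/2 = 1 + 1/2 by norm_num, Real.rpow_add hN0, Real.rpow_one,
      ← Real.sqrt_eq_rpow]
  rw [hrpow]
  set L0 : ℝ := 2*Real.sqrt N*M/r + 8*(N*Real.sqrt N)*M + 4*N^2/μ*M^2 with hL0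
  have hkey : ∀ k : Fin p, |Afun μ X₀ k w * Bfun X₀ k w
      - Afun μ X₀ k w' * Bfun X₀ k w'| ≤ L0 * ‖w - w'‖ := by
    intro k
    have e : Afun μ X₀ k w * Bfun X₀ k w - Afun μ X₀ k w' * Bfun X₀ k w'
        = Afun μ X₀ k w * (Bfun X₀ k w - Bfun X₀ k w')
          + (Afun μ X₀ k w - Afun μ X₀ k w') * Bfun X₀ k w' := by ring
    rw [e]
    have hA1 : |Afun μ X₀ k w| ≤ 1 := abs_tanh_le_one _
    have t1 : |Afun μ X₀ k w * (Bfun X₀ k w - Bfun X₀ k w')| ≤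
        (2*Real.sqrt N*M/r + 8*(N*Real.sqrt N)*M) * ‖w - w'‖ := by
      rw [abs_mul]
      calc |Afun μ X₀ k w| * |Bfun X₀ k w - Bfun X₀ k w'|
          ≤ 1 * ((2*Real.sqrt N*M/r + 8*(N*Real.sqrt N)*M) * ‖w - w'‖) :=
            mul_le_mul hA1 (hBd k) (abs_nonneg _) zero_le_one
        _ = (2*Real.sqrt N*M/r + 8*(N*Real.sqrt N)*M) * ‖w - w'‖ := one_mul _
    have t2 : |(Afun μ X₀ k w - Afun μ X₀ k w') * Bfun X₀ k w'| ≤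
        (((Real.sqrt m + 2*Real.sqrt N)*M/μ) * ‖w - w'‖) *
          ((Real.sqrt m + 2*Real.sqrt N)*M) := by
      rw [abs_mul]
      exact mul_le_mul (hAd k) (hBbd k) (abs_nonneg _) (by positivity)
    have h4 : ((Real.sqrt m + 2*Real.sqrt N)*M)^2 ≤ 4*N^2*M^2 := by
      calc ((Real.sqrt m + 2*Real.sqrt N)*M)^2
          = (Real.sqrt m + 2*Real.sqrt N)^2 * M^2 := by ring
        _ ≤ 4*N^2*M^2 := mul_le_mul_of_nonneg_right hcross (sq_nonneg M)
    have t3 : (((Real.sqrt m + 2*Real.sqrt N)*M/μ) * ‖w - w'‖) *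
        ((Real.sqrt m + 2*Real.sqrt N)*M) ≤ 4*N^2/μ*M^2 * ‖w - w'‖ := by
      calc (((Real.sqrt m + 2*Real.sqrt N)*M/μ) * ‖w - w'‖) *
            ((Real.sqrt m + 2*Real.sqrt N)*M)
          = (μ⁻¹*‖w - w'‖) * (((Real.sqrt m + 2*Real.sqrt N)*M)^2) := by ring
        _ ≤ (μ⁻¹*‖w - w'‖) * (4*N^2*M^2) :=
            mul_le_mul_of_nonneg_left h4 (by positivity)
        _ = 4*N^2/μ*M^2 * ‖w - w'‖ := by ring
    calc |Afun μ X₀ k w * (Bfun X₀ k w - Bfun X₀ k w')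
          + (Afun μ X₀ k w - Afun μ X₀ k w') * Bfun X₀ k w'|
        ≤ |Afun μ X₀ k w * (Bfun X₀ k w - Bfun X₀ k w')|
          + |(Afun μ X₀ k w - Afun μ X₀ k w') * Bfun X₀ k w'| := abs_add_le _ _
      _ ≤ (2*Real.sqrt N*M/r + 8*(N*Real.sqrt N)*M) * ‖w - w'‖
          + 4*N^2/μ*M^2 * ‖w - w'‖ := add_le_add t1 (t2.trans t3)
      _ = L0 * ‖w - w'‖ := by rw [hL0]; ring
  -- assemble
  have hval1 : ⟪w, gradg (m+1) p μ X₀ w⟫ / ‖w‖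
      = (p:ℝ)⁻¹ * ∑ k : Fin p, Afun μ X₀ k w * Bfun X₀ k w :=
    value_eq hμ X₀ w hw0 (lt_of_lt_of_le hwR hRle1)
  have hval2 : ⟪w', gradg (m+1) p μ X₀ w'⟫ / ‖w'‖
      = (p:ℝ)⁻¹ * ∑ k : Fin p, Afun μ X₀ k w' * Bfun X₀ k w' :=
    value_eq hμ X₀ w' hw'0 (lt_of_lt_of_le hw'R hRle1)
  rw [hval1, hval2, ← mul_sub, ← Finset.sum_sub_distrib, abs_mul,
    abs_of_nonneg (by positivity : (0:ℝ) ≤ ((p:ℝ))⁻¹)]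
  have hL0nn : 0 ≤ L0 * ‖w - w'‖ := by
    apply mul_nonneg _ hΔ0
    rw [hL0]
    have : 0 ≤ 2*Real.sqrt N*M/r := by positivity
    have : 0 ≤ 8*(N*Real.sqrt N)*M := by positivity
    have : 0 ≤ 4*N^2/μ*M^2 := by positivity
    linarith
  have hsum : |∑ k : Fin p, (Afun μ X₀ k w * Bfun X₀ k w
      - Afun μ X₀ k w' * Bfun X₀ k w')| ≤ (p:ℝ) * (L0 * ‖w - w'‖) := by
    calc |∑ k : Fin p, (Afun μ X₀ k w * Bfun X₀ k w - Afun μ X₀ k w' * Bfun X₀ k w')|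
        ≤ ∑ k : Fin p, |Afun μ X₀ k w * Bfun X₀ k w - Afun μ X₀ k w' * Bfun X₀ k w'| :=
          Finset.abs_sum_le_sum_abs _ _
      _ ≤ ∑ _k : Fin p, L0 * ‖w - w'‖ := Finset.sum_le_sum fun k _ => hkey k
      _ = (p:ℝ) * (L0 * ‖w - w'‖) := by
          rw [Finset.sum_const, Finset.card_univ, Fintype.card_fin, nsmul_eq_mul]
  calc ((p:ℝ))⁻¹ * |∑ k : Fin p, (Afun μ X₀ k w * Bfun X₀ k w
        - Afun μ X₀ k w' * Bfun X₀ k w')|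
      ≤ ((p:ℝ))⁻¹ * ((p:ℝ) * (L0 * ‖w - w'‖)) :=
        mul_le_mul_of_nonneg_left hsum (by positivity)
    _ = (((p:ℝ))⁻¹ * (p:ℝ)) * (L0 * ‖w - w'‖) := by ring
    _ ≤ 1 * (L0 * ‖w - w'‖) := by
        apply mul_le_mul_of_nonneg_right _ hL0nn
        rcases Nat.eq_zero_or_pos p with hp | hp
        · subst hp; norm_num
        · rw [inv_mul_cancel₀ (by exact_mod_cast hp.ne' : ((p:ℝ)) ≠ 0)]
    _ = L0 * ‖w - w'‖ := one_mul _

end St11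

/-- Proposition: Lipschitz property of the directional gradient. -/
theorem statement11 (n p : ℕ) (μ r : ℝ) (hμ : 0 < μ) (hr : r ∈ Set.Ioo (0 : ℝ) 1)
    (X₀ : Matrix (Fin n) (Fin p) ℝ) :
    ∀ w ∈ GammaSet n ∩ {w | r ≤ ‖w‖}, ∀ w' ∈ GammaSet n ∩ {w | r ≤ ‖w‖},
      |⟪w, gradg n p μ X₀ w⟫ / ‖w‖ - ⟪w', gradg n p μ X₀ w'⟫ / ‖w'‖| ≤
        (2 * Real.sqrt n * Minf X₀ / r +
         8 * (n : ℝ) ^ ((3 : ℝ) / 2) * Minf X₀ +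
         4 * (n : ℝ) ^ 2 / μ * Minf X₀ ^ 2) * ‖w - w'‖ := by
  rcases Nat.lt_or_ge n 2 with hn | hn
  · intro w hw w' hw'
    exfalso
    interval_cases n
    · have h := hw.1
      simp only [GammaSet, Set.mem_setOf_eq] at h
      rw [show ((4*((0:ℕ):ℝ)-1)/(4*((0:ℕ):ℝ))) = 0 by norm_num, Real.sqrt_zero] at h
      exact absurd h (not_lt.mpr (norm_nonneg w))
    · have h0 : ‖w‖ = 0 := by
        rw [EuclideanSpace.norm_eq]
        simp
      have h1 : r ≤ ‖w‖ := hw.2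
      rw [h0] at h1
      linarith [hr.1]
  · obtain ⟨m, rfl⟩ : ∃ m, n = m + 1 := ⟨n - 1, by omega⟩
    exact St11.aux_main m p (by omega) μ r hμ hr X₀

end
end

section
/- Let f(t) = 1/(1+t)² on [0,1]. For every T > 1, set β = 1 − 1/√T and define the coefficients b_k = (−1)^k (k+1) β^k for k ≥ 0 and the function p(t) = Σ_{k=0}^∞ b_k t^k = 1/(1+βt)². Then: (i) Σ_{k=0}^∞ |b_k| = T; (ii) ∫_0^1 |f(t) − p(t)| dt ≤ 1/(2√T); (iii) sup_{t ∈ [0,1]} |f(t) − p(t)| ≤ 1/√T; and (iv) 0 < Σ_{k=0}^∞ b_k/(1+k)³ ≤ Σ_{k=0}^∞ |b_k|/(1+k)³ < 2. -/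
open MeasureTheory ProbabilityTheory Real Matrix
open scoped RealInnerProductSpace ENNReal NNReal

noncomputable section

lemma aux_pi_sq_six_lt_two : Real.pi ^ 2 / 6 < 2 := by
  nlinarith [Real.pi_lt_d2, Real.pi_pos]

lemma aux_pair (β : ℝ) (hβ0 : 0 ≤ β) (hβ1 : β ≤ 1) (j : ℕ) :
    0 ≤ 1 * (β^(2*j) / (((2*j:ℕ):ℝ)+1)^2) + -1 * (β^(2*j+1) / (((2*j+1:ℕ):ℝ)+1)^2) := by
  have h1 : β^(2*j+1) ≤ β^(2*j) := pow_le_pow_of_le_one hβ0 hβ1 (Nat.le_succ _)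
  have h2 : (((2*j:ℕ):ℝ)+1)^2 ≤ (((2*j+1:ℕ):ℝ)+1)^2 := by
    push_cast
    nlinarith [Nat.cast_nonneg (α := ℝ) j]
  have h3 : (0:ℝ) < (((2*j:ℕ):ℝ)+1)^2 := by positivity
  have hle := div_le_div₀ (pow_nonneg hβ0 _) h1 h3 h2
  linarith

lemma aux_hasSum_geom_sq {r : ℝ} (hr : |r| < 1) :
    HasSum (fun k : ℕ => ((k : ℝ) + 1) * r ^ k) (1 / (1 - r) ^ 2) := by
  have h := hasSum_choose_mul_geometric_of_norm_lt_one (𝕜 := ℝ) 1 (by rwa [Real.norm_eq_abs])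
  simpa [Nat.choose_one_right] using h

set_option maxHeartbeats 1600000 in
/-- Lemma: polynomial approximation of `1/(1+t)²` on `[0,1]`. -/
theorem statement15 (T β : ℝ) (hT : 1 < T) (hβ : β = 1 - 1 / Real.sqrt T)
    (b : ℕ → ℝ) (hb : ∀ k : ℕ, b k = (-1) ^ k * ((k : ℝ) + 1) * β ^ k)
    (P : ℝ → ℝ) (hP : ∀ t : ℝ, P t = 1 / (1 + β * t) ^ 2) :
    (∀ t ∈ Set.Icc (0 : ℝ) 1, ∑' k : ℕ, b k * t ^ k = P t) ∧
    (∑' k : ℕ, |b k|) = T ∧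
    (∫ t in (0 : ℝ)..1, |1 / (1 + t) ^ 2 - P t|) ≤ 1 / (2 * Real.sqrt T) ∧
    (∀ t ∈ Set.Icc (0 : ℝ) 1, |1 / (1 + t) ^ 2 - P t| ≤ 1 / Real.sqrt T) ∧
    0 < (∑' k : ℕ, b k / ((1 : ℝ) + k) ^ 3) ∧
    (∑' k : ℕ, b k / ((1 : ℝ) + k) ^ 3) ≤ (∑' k : ℕ, |b k| / ((1 : ℝ) + k) ^ 3) ∧
    (∑' k : ℕ, |b k| / ((1 : ℝ) + k) ^ 3) < 2 := by
  have hT0 : (0:ℝ) < T := by linarith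
  have hsT0 : 0 < Real.sqrt T := Real.sqrt_pos.2 hT0
  have hsT1 : 1 < Real.sqrt T := by
    nlinarith [Real.sq_sqrt hT0.le, Real.sqrt_nonneg T]
  have hinv1 : 1 / Real.sqrt T < 1 := by rw [div_lt_one hsT0]; exact hsT1
  have hβ1 : β < 1 := by
    rw [hβ]
    have h : 0 < 1 / Real.sqrt T := by positivity
    linarith
  have hβ0 : 0 < β := by rw [hβ]; linarith
  have h1β : 1 - β = 1 / Real.sqrt T := by rw [hβ]; ring
  -- power series identity
  have hbt : ∀ t ∈ Set.Icc (0:ℝ) 1, HasSum (fun k : ℕ => b k * t ^ k) (P t) := by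
    intro t ht
    obtain ⟨ht0, ht1⟩ := ht
    have hβt0 : 0 ≤ β * t := by positivity
    have hβt1 : β * t < 1 := by nlinarith
    have hr : |(-(β * t))| < 1 := by rw [abs_neg, abs_of_nonneg hβt0]; exact hβt1
    have h := aux_hasSum_geom_sq hr
    have he : (fun k : ℕ => ((k:ℝ)+1) * (-(β*t)) ^ k) = fun k : ℕ => b k * t ^ k := by
      funext k
      rw [hb k, show -(β*t) = (-1) * (β*t) by ring, mul_pow, mul_pow]
      ring
    rw [he] at h
    have : (1:ℝ) / (1 - -(β*t)) ^ 2 = P t := by rw [hP, sub_neg_eq_add]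
    rwa [this] at h
  have habsb : ∀ k : ℕ, |b k| = ((k:ℝ)+1) * β ^ k := by
    intro k
    rw [hb k, abs_mul, abs_mul, abs_pow, abs_neg, abs_one, one_pow, one_mul,
      abs_pow, abs_of_nonneg hβ0.le, abs_of_nonneg (by positivity : (0:ℝ) ≤ (k:ℝ)+1)]
  have hβabs : |β| < 1 := by rw [abs_of_nonneg hβ0.le]; exact hβ1
  have habsSum : HasSum (fun k : ℕ => |b k|) T := by
    have h := aux_hasSum_geom_sq hβabs
    have he : (fun k : ℕ => ((k:ℝ)+1) * β ^ k) = fun k : ℕ => |b k| := by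
      funext k; rw [habsb k]
    rw [he] at h
    have hv : (1:ℝ) / (1 - β) ^ 2 = T := by
      rw [h1β, div_pow, one_pow, one_div_one_div, Real.sq_sqrt hT0.le]
    rwa [hv] at h
  -- pointwise bound
  have hkey : ∀ t ∈ Set.Icc (0:ℝ) 1,
      0 ≤ 1/(1+β*t)^2 - 1/(1+t)^2 ∧
      1/(1+β*t)^2 - 1/(1+t)^2 ≤ (1-β)*(1 - 1/(1+t)^2) := by
    rintro t ⟨ht0, ht1⟩
    have ha : (0:ℝ) < 1 + β*t := by positivity
    have hc : (0:ℝ) < 1 + t := by positivity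
    constructor
    · have hbtle : β*t ≤ t := by nlinarith
      have hsq : (β*t)*(β*t) ≤ t*t := mul_le_mul hbtle hbtle (by positivity) ht0
      have h1 : (1+β*t)^2 ≤ (1+t)^2 := by nlinarith
      have h2 := one_div_le_one_div_of_le (by positivity) h1
      linarith
    · have h1 : 1/(1+β*t)^2 - 1/(1+t)^2 = ((1+t)^2 - (1+β*t)^2)/((1+β*t)^2*(1+t)^2) := by
        field_simp
      have h2 : (1-β)*(1 - 1/(1+t)^2) = (1-β)*((1+t)^2-1)/(1+t)^2 := by
        field_simp
      rw [h1, h2, div_le_div_iff₀ (by positivity) (by positivity)]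
      have hstep : 2+t+β*t ≤ (2+t)*(1+β*t)^2 := by
        nlinarith [mul_nonneg hβ0.le ht0, mul_nonneg (mul_nonneg hβ0.le ht0) ht0,
          sq_nonneg (β*t), mul_nonneg (mul_nonneg (mul_nonneg hβ0.le hβ0.le)
            (mul_nonneg ht0 ht0)) ht0]
      have hmul := mul_le_mul_of_nonneg_left hstep
        (mul_nonneg (mul_nonneg (by linarith : (0:ℝ) ≤ 1-β) ht0) (sq_nonneg (1+t)))
      nlinarith [hmul]
  have hsup : ∀ t ∈ Set.Icc (0:ℝ) 1,
      |1/(1+t)^2 - P t| ≤ (1-β)*(1 - 1/(1+t)^2) := by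
    intro t ht
    obtain ⟨h0, h1⟩ := hkey t ht
    rw [hP, abs_sub_comm, abs_of_nonneg h0]
    exact h1
  -- integrability
  have hcP : ContinuousOn (fun t : ℝ => |1/(1+t)^2 - P t|) (Set.uIcc 0 1) := by
    rw [Set.uIcc_of_le zero_le_one]
    apply ContinuousOn.abs
    apply ContinuousOn.sub
    · exact ContinuousOn.div continuousOn_const (by fun_prop) fun t ht => by
        have h := ht.1
        have h2 : (0:ℝ) < 1 + t := by linarith
        positivity
    · have hPe : P = fun t : ℝ => 1/(1+β*t)^2 := funext hP
      rw [hPe]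
      exact ContinuousOn.div continuousOn_const (by fun_prop) fun t ht => by
        have h := ht.1
        have h2 : (0:ℝ) < 1 + β*t := by nlinarith
        positivity
  have hcg : ContinuousOn (fun t : ℝ => (1-β)*(1 - 1/(1+t)^2)) (Set.uIcc 0 1) := by
    rw [Set.uIcc_of_le zero_le_one]
    apply ContinuousOn.mul continuousOn_const
    apply ContinuousOn.sub continuousOn_const
    exact ContinuousOn.div continuousOn_const (by fun_prop) fun t ht => by
      have h := ht.1
      have h2 : (0:ℝ) < 1 + t := by linarith
      positivity
  have hint1 : IntervalIntegrable (fun t : ℝ => |1/(1+t)^2 - P t|)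
      MeasureTheory.volume 0 1 := hcP.intervalIntegrable
  have hint2 : IntervalIntegrable (fun t : ℝ => (1-β)*(1 - 1/(1+t)^2))
      MeasureTheory.volume 0 1 := hcg.intervalIntegrable
  have hFTC : (∫ t in (0:ℝ)..1, (1-β)*(1 - 1/(1+t)^2)) = (1-β)/2 := by
    have hderiv : ∀ t ∈ Set.uIcc (0:ℝ) 1,
        HasDerivAt (fun t : ℝ => (1-β)*(t + (1+t)⁻¹)) ((1-β)*(1 - 1/(1+t)^2)) t := by
      intro t ht
      rw [Set.uIcc_of_le zero_le_one] at ht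
      have hpos : (0:ℝ) < 1 + t := by have := ht.1; linarith
      have h1 : HasDerivAt (fun t : ℝ => 1 + t) 1 t := (hasDerivAt_id t).const_add 1
      have h2 := h1.inv hpos.ne'
      have h3 := (hasDerivAt_id t).add h2
      have h4 := h3.const_mul (1-β)
      refine h4.congr_deriv ?_
      ring
    rw [intervalIntegral.integral_eq_sub_of_hasDerivAt hderiv hint2]
    norm_num
    ring
  have hintle : (∫ t in (0:ℝ)..1, |1/(1+t)^2 - P t|)
      ≤ ∫ t in (0:ℝ)..1, (1-β)*(1 - 1/(1+t)^2) :=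
    intervalIntegral.integral_mono_on zero_le_one hint1 hint2 hsup
  -- part (iv) preliminaries
  have hf4 : ∀ k : ℕ, b k / ((1:ℝ)+k)^3 = (-1)^k * (β^k / ((k:ℝ)+1)^2) := by
    intro k
    have hk : (0:ℝ) < (k:ℝ)+1 := by positivity
    rw [hb k, show ((1:ℝ)+(k:ℝ)) = (k:ℝ)+1 by ring]
    field_simp
  have habs4 : ∀ k : ℕ, |b k| / ((1:ℝ)+k)^3 = β^k / ((k:ℝ)+1)^2 := by
    intro k
    have hk : (0:ℝ) < (k:ℝ)+1 := by positivity
    rw [habsb k, show ((1:ℝ)+(k:ℝ)) = (k:ℝ)+1 by ring]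
    field_simp
  have hsummaux : Summable (fun k : ℕ => β^k / ((k:ℝ)+1)^2) := by
    apply Summable.of_nonneg_of_le (fun k => by positivity) (fun k => ?_)
      (summable_geometric_of_lt_one hβ0.le hβ1)
    exact div_le_self (by positivity) (by nlinarith [Nat.cast_nonneg (α := ℝ) k])
  have hsumabs4 : Summable (fun k : ℕ => |b k| / ((1:ℝ)+k)^3) :=
    hsummaux.congr fun k => (habs4 k).symm
  have hsumf4 : Summable (fun k : ℕ => b k / ((1:ℝ)+k)^3) := by
    apply Summable.of_abs
    apply hsummaux.congr fun k => ?_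
    rw [← habs4 k, abs_div, abs_of_nonneg (show (0:ℝ) ≤ ((1:ℝ)+k)^3 by positivity)]
  have hmid : (∑' k : ℕ, b k / ((1:ℝ)+k)^3) ≤ ∑' k : ℕ, |b k| / ((1:ℝ)+k)^3 := by
    apply Summable.tsum_le_tsum (fun k => ?_) hsumf4 hsumabs4
    gcongr
    exact le_abs_self _
  -- Basel
  have hbasel : HasSum (fun k : ℕ => (1:ℝ)/((k:ℝ)+1)^2) (π^2/6) := by
    have h0 : HasSum (fun n : ℕ => (1:ℝ)/(n:ℝ)^2)
        (π^2/6 + ∑ i ∈ Finset.range 1, (1:ℝ)/(i:ℝ)^2) := by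
      simpa using hasSum_zeta_two
    have h2 := (hasSum_nat_add_iff (f := fun n : ℕ => (1:ℝ)/(n:ℝ)^2) 1).2 h0
    have he : (fun n : ℕ => (1:ℝ)/((n+1:ℕ):ℝ)^2) = fun n : ℕ => (1:ℝ)/((n:ℝ)+1)^2 := by
      funext n; push_cast; ring
    rwa [he] at h2
  have hup : (∑' k : ℕ, |b k| / ((1:ℝ)+k)^3) < 2 := by
    rw [tsum_congr habs4]
    have hle : (∑' k : ℕ, β^k/((k:ℝ)+1)^2) ≤ π^2/6 := by
      rw [← hbasel.tsum_eq]
      apply Summable.tsum_le_tsum (fun k => ?_) hsummaux hbasel.summable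
      gcongr
      exact pow_le_one₀ hβ0.le hβ1.le
    exact lt_of_le_of_lt hle aux_pi_sq_six_lt_two
  -- positivity of the alternating sum
  have hpos : 0 < ∑' k : ℕ, b k / ((1:ℝ)+k)^3 := by
    have hse : Summable (fun j : ℕ => b (2*j) / ((1:ℝ)+(2*j:ℕ))^3) :=
      hsumf4.comp_injective (mul_right_injective₀ two_ne_zero)
    have hso : Summable (fun j : ℕ => b (2*j+1) / ((1:ℝ)+(2*j+1:ℕ))^3) :=
      hsumf4.comp_injective (fun a b h => by omega)
    have he := hse.hasSum
    have ho := hso.hasSum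
    have htot := HasSum.even_add_odd (f := fun k : ℕ => b k / ((1:ℝ)+(k:ℕ))^3) he ho
    rw [htot.tsum_eq]
    have hpair := HasSum.add he ho
    rw [← hpair.tsum_eq]
    refine Summable.tsum_pos hpair.summable (fun j => ?_) 0 ?_
    · rw [hf4 (2*j), hf4 (2*j+1)]
      have e1 : ((-1:ℝ))^(2*j) = 1 := by simp [pow_mul]
      have e2 : ((-1:ℝ))^(2*j+1) = -1 := by simp [pow_succ, pow_mul]
      rw [e1, e2]
      exact aux_pair β hβ0.le hβ1.le j
    · have hv : b (2*0) / ((1:ℝ)+(2*0:ℕ))^3 + b (2*0+1) / ((1:ℝ)+(2*0+1:ℕ))^3 = 1 - β/4 := by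
        rw [hb, hb]
        norm_num
        ring
      rw [hv]
      linarith
  exact ⟨fun t ht => (hbt t ht).tsum_eq, habsSum.tsum_eq,
    le_trans hintle (by rw [hFTC, h1β, div_div, mul_comm]),
    fun t ht => by
      refine le_trans (hsup t ht) ?_
      have h4 : (0:ℝ) ≤ 1/(1+t)^2 := by
        have h := ht.1
        have h2 : (0:ℝ) < 1 + t := by linarith
        positivity
      rw [← h1β]
      nlinarith [h4],
    hpos, hmid, hup⟩


end
end

section
/- Let X ~ N(0, σ_X²) and Y ~ N(0, σ_Y²) be independent real Gaussian random variables with σ_X, σ_Y > 0, and let μ > 0. Then E[ (1 − tanh²((X+Y)/μ)) · XY · 1{X+Y > 0} ] ≥ −(1/√(2π)) · μ σ_X² σ_Y² / (σ_X² + σ_Y²)^{3/2} − (3/√(2π)) · σ_X² σ_Y² μ³ / (σ_X² + σ_Y²)^{5/2}. -/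
open MeasureTheory ProbabilityTheory Real Matrix
open scoped RealInnerProductSpace ENNReal NNReal

noncomputable section

section Statement17Aux
open Set Filter Asymptotics

lemma tanh_sq_lt_one (t : ℝ) : Real.tanh t ^ 2 < 1 := by
  rw [Real.tanh_eq_sinh_div_cosh, div_pow, div_lt_one (by positivity)]
  nlinarith [Real.cosh_sq t]

lemma hasDerivAt_tanh (t : ℝ) : HasDerivAt Real.tanh (1 - Real.tanh t ^ 2) t := by
  have h : HasDerivAt (fun x => Real.sinh x / Real.cosh x)
      ((Real.cosh t * Real.cosh t - Real.sinh t * Real.sinh t) / Real.cosh t ^ 2) t :=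
    (Real.hasDerivAt_sinh t).div (Real.hasDerivAt_cosh t) (Real.cosh_pos t).ne'
  have heq : (Real.cosh t * Real.cosh t - Real.sinh t * Real.sinh t) / Real.cosh t ^ 2
      = 1 - Real.tanh t ^ 2 := by
    rw [Real.tanh_eq_sinh_div_cosh, div_pow]
    have := Real.cosh_sq_sub_sinh_sq t
    have hc := (Real.cosh_pos t).ne'
    field_simp
  rw [heq] at h
  exact h.congr_of_eventuallyEq (Eventually.of_forall fun x => (Real.tanh_eq_sinh_div_cosh x))

lemma tendsto_tanh_atTop : Tendsto Real.tanh atTop (nhds 1) := by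
  have hrepr : ∀ x : ℝ, Real.tanh x = (1 - Real.exp (-(2*x))) / (1 + Real.exp (-(2*x))) := by
    intro x
    have h1 : Real.exp (-(2*x)) = Real.exp (-x) * Real.exp (-x) := by
      rw [← Real.exp_add]; ring_nf
    have h2 : Real.exp (-x) = (Real.exp x)⁻¹ := Real.exp_neg x
    rw [Real.tanh_eq_sinh_div_cosh, Real.sinh_eq, Real.cosh_eq, h1, h2]
    have hE := Real.exp_pos x
    have h3 : 0 < Real.exp x + (Real.exp x)⁻¹ := by positivity
    have h4 : 0 < 1 + (Real.exp x)⁻¹ * (Real.exp x)⁻¹ := by positivity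
    field_simp
  have hlin : Tendsto (fun x : ℝ => -(2*x)) atTop atBot := by
    apply tendsto_neg_atBot_iff.mpr
    exact (tendsto_const_mul_atTop_iff_pos tendsto_id).mpr two_pos |>.comp tendsto_id
  have hlim : Tendsto (fun x : ℝ => Real.exp (-(2*x))) atTop (nhds 0) :=
    Real.tendsto_exp_atBot.comp hlin
  have : Tendsto (fun x : ℝ => (1 - Real.exp (-(2*x))) / (1 + Real.exp (-(2*x)))) atTop
      (nhds ((1 - 0) / (1 + 0))) :=
    ((tendsto_const_nhds.sub hlim).div (tendsto_const_nhds.add hlim) (by norm_num))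
  simp only [sub_zero, add_zero, div_one] at this
  exact this.congr (fun x => (hrepr x).symm)

lemma sech_sq_nonneg (t : ℝ) : 0 ≤ 1 - Real.tanh t ^ 2 := le_of_lt (by linarith [_root_.tanh_sq_lt_one t])

lemma sech_sq_le_one (t : ℝ) : 1 - Real.tanh t ^ 2 ≤ 1 := by nlinarith [sq_nonneg (Real.tanh t)]

-- derivative of s ↦ μ * tanh (s/μ)
lemma hasDerivAt_mul_tanh {μ : ℝ} (hμ : 0 < μ) (s : ℝ) :
    HasDerivAt (fun s => μ * Real.tanh (s/μ)) (1 - Real.tanh (s/μ) ^ 2) s := by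
  have h1 : HasDerivAt (fun s : ℝ => s / μ) (1/μ) s := (hasDerivAt_id s).div_const μ |>.congr_deriv rfl
  have h2 := (hasDerivAt_tanh (s/μ)).comp s h1
  have h3 := h2.const_mul μ
  refine h3.congr_deriv ?_
  field_simp [hμ.ne']

lemma integrableOn_sech_sq {μ : ℝ} (hμ : 0 < μ) :
    IntegrableOn (fun s : ℝ => 1 - Real.tanh (s/μ) ^ 2) (Ioi 0) := by
  apply integrableOn_Ioi_deriv_of_nonneg' (g := fun s => μ * Real.tanh (s/μ))
    (fun x _ => hasDerivAt_mul_tanh hμ x) (fun x hx => sech_sq_nonneg _)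
  exact (tendsto_tanh_atTop.comp ((tendsto_id.atTop_div_const hμ))).const_mul μ

lemma integral_sech_sq {μ : ℝ} (hμ : 0 < μ) :
    ∫ s in Ioi (0:ℝ), (1 - Real.tanh (s/μ) ^ 2) = μ := by
  have h := integral_Ioi_of_hasDerivAt_of_tendsto' (f := fun s => μ * Real.tanh (s/μ))
    (fun x _ => hasDerivAt_mul_tanh hμ x) (integrableOn_sech_sq hμ)
    ((tendsto_tanh_atTop.comp ((tendsto_id.atTop_div_const hμ))).const_mul μ)
  simpa [Real.tanh_zero] using h
lemma integral_mul_gauss_eq_zero {b : ℝ} (hb : 0 < b) :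
    ∫ x : ℝ, x * Real.exp (-b * x^2) = 0 := by
  have h := MeasureTheory.integral_neg_eq_self (fun x : ℝ => x * Real.exp (-b * x^2)) volume
  simp only [neg_sq, neg_mul] at h
  rw [integral_neg] at h
  have h2 : ∫ x : ℝ, x * Real.exp (-b * x ^ 2) = ∫ x : ℝ, x * Real.exp (-(b * x ^ 2)) := by
    congr 1; funext x; ring_nf
  rw [h2]
  linarith

lemma integrable_sq_mul_gauss {b : ℝ} (hb : 0 < b) :
    Integrable (fun x : ℝ => x^2 * Real.exp (-b * x^2)) := by
  have h := integrable_rpow_mul_exp_neg_mul_sq hb (s := 2) (by norm_num)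
  convert h using 2 with x
  rw [← Real.rpow_natCast x 2]
  norm_num

lemma tendsto_mul_gauss_atTop {b : ℝ} (hb : 0 < b) :
    Tendsto (fun x : ℝ => x * Real.exp (-b * x^2)) atTop (nhds 0) := by
  have h := rpow_mul_exp_neg_mul_sq_isLittleO_exp_neg hb 1
  have h0 : Tendsto (fun x : ℝ => Real.exp (-(1/2) * x)) atTop (nhds 0) := by
    apply Real.tendsto_exp_atBot.comp
    apply Tendsto.const_mul_atTop_of_neg (by norm_num : (-(1/2):ℝ) < 0) tendsto_id
  have h1 := h.tendsto_zero_of_tendsto h0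
  apply h1.congr'
  filter_upwards with x
  rw [Real.rpow_one]

lemma tendsto_mul_gauss_atBot {b : ℝ} (hb : 0 < b) :
    Tendsto (fun x : ℝ => x * Real.exp (-b * x^2)) atBot (nhds 0) := by
  have h := (tendsto_mul_gauss_atTop hb).comp tendsto_neg_atBot_atTop
  have h2 : (fun x : ℝ => -(x * Real.exp (-b * x^2))) = ((fun x : ℝ => x * Real.exp (-b * x^2)) ∘ Neg.neg) := by
    funext x; simp only [Function.comp, neg_sq, neg_mul]
  rw [← h2] at h
  have := h.neg
  simpa using this

lemma integral_sq_mul_gauss {b : ℝ} (hb : 0 < b) :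
    ∫ x : ℝ, x^2 * Real.exp (-b * x^2) = Real.sqrt (π / b) / (2*b) := by
  -- g x = x * exp(-b x^2), g' x = exp(-b x^2) - 2b x^2 exp(-b x^2)
  set g : ℝ → ℝ := fun x => x * Real.exp (-b * x^2) with hg
  set g' : ℝ → ℝ := fun x => Real.exp (-b * x^2) - 2*b*(x^2 * Real.exp (-b * x^2)) with hg'
  have hderiv : ∀ x : ℝ, HasDerivAt g (g' x) x := by
    intro x
    have h1 : HasDerivAt (fun x : ℝ => -b * x^2) (-b * (2*x)) x := by
      simpa using ((hasDerivAt_pow 2 x).const_mul (-b))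
    have h2 := (Real.hasDerivAt_exp (-b * x^2)).comp x h1
    have h3 := (hasDerivAt_id x).mul h2
    refine h3.congr_deriv ?_
    simp only [hg', id, Function.comp]
    ring
  have hint : Integrable g' := by
    apply Integrable.sub (integrable_exp_neg_mul_sq hb)
    exact (integrable_sq_mul_gauss hb).const_mul _
  have htop : Tendsto g atTop (nhds 0) := tendsto_mul_gauss_atTop hb
  have hbot : Tendsto g atBot (nhds 0) := tendsto_mul_gauss_atBot hb
  have hIoi : ∫ x in Ioi (0:ℝ), g' x = 0 - g 0 :=
    integral_Ioi_of_hasDerivAt_of_tendsto' (fun x _ => hderiv x) hint.integrableOn htop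
  have hIic : ∫ x in Iic (0:ℝ), g' x = g 0 - 0 :=
    integral_Iic_of_hasDerivAt_of_tendsto' (fun x _ => hderiv x) hint.integrableOn hbot
  have hsplit : ∫ x : ℝ, g' x = (∫ x in Iic (0:ℝ), g' x) + ∫ x in Ioi (0:ℝ), g' x := by
    rw [← integral_add_compl (measurableSet_Iic : MeasurableSet (Iic (0:ℝ))) hint, compl_Iic]
  have hzero : ∫ x : ℝ, g' x = 0 := by
    rw [hsplit, hIoi, hIic]; simp [hg]
  have hlin : ∫ x : ℝ, g' x = Real.sqrt (π / b) - 2*b*∫ x : ℝ, x^2 * Real.exp (-b * x^2) := by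
    rw [hg']
    rw [integral_sub (integrable_exp_neg_mul_sq hb) ((integrable_sq_mul_gauss hb).const_mul _)]
    rw [integral_gaussian, MeasureTheory.integral_const_mul]
  rw [hlin] at hzero
  have h2b : (2*b) ≠ 0 := by positivity
  field_simp at hzero ⊢
  linarith
noncomputable def gpdf (v : ℝ) (x : ℝ) : ℝ := (Real.sqrt (2*π*v))⁻¹ * Real.exp (-x^2/(2*v))

lemma gpdf_eq (v : ℝ) (hv : 0 ≤ v) (x : ℝ) :
    gaussianPDFReal 0 ⟨v, hv⟩ x = gpdf v x := by
  simp [gaussianPDFReal, gpdf]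
  rfl

lemma gpdf_nonneg (v x : ℝ) : 0 ≤ gpdf v x := by
  unfold gpdf; positivity

lemma gpdf_exp_form {v : ℝ} (hv : 0 < v) (x : ℝ) :
    gpdf v x = (Real.sqrt (2*π*v))⁻¹ * Real.exp (-(2*v)⁻¹ * x^2) := by
  unfold gpdf
  congr 1
  rw [neg_div]
  ring_nf

lemma integrable_gpdf {v : ℝ} (hv : 0 < v) : Integrable (gpdf v) := by
  have h := (integrable_exp_neg_mul_sq (show (0:ℝ) < (2*v)⁻¹ by positivity)).const_mul
    ((Real.sqrt (2*π*v))⁻¹)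
  exact h.congr (Eventually.of_forall fun x => (gpdf_exp_form hv x).symm)

lemma integrable_mul_gpdf {v : ℝ} (hv : 0 < v) : Integrable (fun x => x * gpdf v x) := by
  have h := (integrable_mul_exp_neg_mul_sq (show (0:ℝ) < (2*v)⁻¹ by positivity)).const_mul
    ((Real.sqrt (2*π*v))⁻¹)
  apply h.congr (Eventually.of_forall fun x => ?_)
  rw [gpdf_exp_form hv]
  ring

lemma integrable_abs_mul_gpdf {v : ℝ} (hv : 0 < v) : Integrable (fun x => |x| * gpdf v x) := by
  have h := (integrable_mul_gpdf hv).abs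
  apply h.congr (Eventually.of_forall fun x => ?_)
  show |x * gpdf v x| = |x| * gpdf v x
  rw [abs_mul, abs_of_nonneg (gpdf_nonneg v x)]

lemma integrable_sq_mul_gpdf {v : ℝ} (hv : 0 < v) : Integrable (fun x => x^2 * gpdf v x) := by
  have h := (integrable_sq_mul_gauss (show (0:ℝ) < (2*v)⁻¹ by positivity)).const_mul
    ((Real.sqrt (2*π*v))⁻¹)
  apply h.congr (Eventually.of_forall fun x => ?_)
  rw [gpdf_exp_form hv]
  ring

lemma integral_gpdf {v : ℝ} (hv : 0 < v) : ∫ x, gpdf v x = 1 := by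
  have h := integral_gaussianPDFReal_eq_one 0 (v := ⟨v, hv.le⟩) (by intro h; have h' : v = 0 := congrArg NNReal.toReal h; linarith)
  rw [← h]
  congr 1
  funext x
  rw [gpdf_eq v hv.le]

lemma integral_mul_gpdf {v : ℝ} (hv : 0 < v) : ∫ x, x * gpdf v x = 0 := by
  have hb : (0:ℝ) < (2*v)⁻¹ := by positivity
  calc ∫ x, x * gpdf v x = ∫ x, (Real.sqrt (2*π*v))⁻¹ * (x * Real.exp (-(2*v)⁻¹ * x^2)) := by
        congr 1; funext x; rw [gpdf_exp_form hv]; ring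
    _ = (Real.sqrt (2*π*v))⁻¹ * ∫ x, x * Real.exp (-(2*v)⁻¹ * x^2) := MeasureTheory.integral_const_mul _ _
    _ = 0 := by rw [integral_mul_gauss_eq_zero hb]; ring

lemma integral_sq_mul_gpdf {v : ℝ} (hv : 0 < v) : ∫ x, x^2 * gpdf v x = v := by
  have hb : (0:ℝ) < (2*v)⁻¹ := by positivity
  calc ∫ x, x^2 * gpdf v x = ∫ x, (Real.sqrt (2*π*v))⁻¹ * (x^2 * Real.exp (-(2*v)⁻¹ * x^2)) := by
        congr 1; funext x; rw [gpdf_exp_form hv]; ring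
    _ = (Real.sqrt (2*π*v))⁻¹ * ∫ x, x^2 * Real.exp (-(2*v)⁻¹ * x^2) := MeasureTheory.integral_const_mul _ _
    _ = (Real.sqrt (2*π*v))⁻¹ * (Real.sqrt (π / (2*v)⁻¹) / (2*(2*v)⁻¹)) := by
        rw [integral_sq_mul_gauss hb]
    _ = v := by
        rw [show π / (2*v)⁻¹ = 2*π*v by field_simp]
        rw [show (2*(2*v)⁻¹) = v⁻¹ by field_simp]
        have hs : Real.sqrt (2*π*v) ≠ 0 := by positivity
        field_simp
lemma gpdf_le {v : ℝ} (hv : 0 < v) (x : ℝ) : gpdf v x ≤ (Real.sqrt (2*π*v))⁻¹ := by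
  unfold gpdf
  have h1 : Real.exp (-x^2/(2*v)) ≤ 1 := by
    rw [Real.exp_le_one_iff]
    apply div_nonpos_of_nonpos_of_nonneg <;> [simp [sq_nonneg]; positivity]
  nlinarith [Real.sqrt_nonneg (2*π*v), inv_nonneg.mpr (Real.sqrt_nonneg (2*π*v)),
    mul_le_of_le_one_right (inv_nonneg.mpr (Real.sqrt_nonneg (2*π*v))) h1]
lemma gpdf_factor {A B : ℝ} (hA : 0 < A) (hB : 0 < B) (x s : ℝ) :
    gpdf A x * gpdf B (s - x)
      = gpdf (A+B) s * gpdf (A*B/(A+B)) (x - A/(A+B)*s) := by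
  have hS : 0 < A + B := by linarith
  unfold gpdf
  rw [mul_mul_mul_comm, ← Real.exp_add, mul_mul_mul_comm, ← Real.exp_add,
    ← mul_inv, ← mul_inv, ← Real.sqrt_mul (by positivity), ← Real.sqrt_mul (by positivity)]
  congr 2
  · field_simp
  · field_simp
    ring

lemma inner_moment {T : ℝ} (hT : 0 < T) (s c : ℝ) :
    ∫ x : ℝ, x * (s - x) * gpdf T (x - c) = c*(s-c) - T := by
  have h := integral_sub_right_eq_self (μ := volume)
    (fun u => (u + c) * (s - (u + c)) * gpdf T u) c
  have hL : ∫ x : ℝ, x * (s - x) * gpdf T (x - c)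
      = ∫ u : ℝ, (u + c) * (s - (u + c)) * gpdf T u := by
    rw [← h]
    congr 1
    funext x
    ring_nf
  rw [hL]
  have hexp : ∀ u : ℝ, (u + c) * (s - (u + c)) * gpdf T u
      = (c*(s-c)) * gpdf T u + ((s - 2*c) * (u * gpdf T u) + (-1) * (u^2 * gpdf T u)) := by
    intro u; ring
  rw [integral_congr_ae (Eventually.of_forall hexp)]
  have hI1 : Integrable (fun u : ℝ => (c*(s-c)) * gpdf T u) := (integrable_gpdf hT).const_mul _
  have hI2 : Integrable (fun u : ℝ => (s - 2*c) * (u * gpdf T u)) :=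
    (integrable_mul_gpdf hT).const_mul _
  have hI3 : Integrable (fun u : ℝ => (-1 : ℝ) * (u^2 * gpdf T u)) :=
    (integrable_sq_mul_gpdf hT).const_mul _
  have hI23 : Integrable (fun u : ℝ => (s - 2*c) * (u * gpdf T u) + (-1) * (u^2 * gpdf T u)) := hI2.add hI3
  rw [integral_add hI1 hI23, integral_add hI2 hI3,
    MeasureTheory.integral_const_mul, MeasureTheory.integral_const_mul,
    MeasureTheory.integral_const_mul,
    integral_sq_mul_gpdf hT, integral_mul_gpdf hT, integral_gpdf hT]
  ring

lemma gaussianReal_eq_withDensity {v : ℝ} (hv : 0 < v) :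
    gaussianReal 0 ⟨v, hv.le⟩ = volume.withDensity
      (fun x => ((Real.toNNReal (gaussianPDFReal 0 ⟨v, hv.le⟩ x)) : ℝ≥0∞)) := by
  refine (gaussianReal_of_var_ne_zero 0 (v := ⟨v, hv.le⟩) ?_).trans ?_
  · intro h
    have h' : v = 0 := congrArg NNReal.toReal h
    linarith
  · rfl

lemma integral_gaussianReal_eq {v : ℝ} (hv : 0 < v) (g : ℝ → ℝ) :
    ∫ x, g x ∂(gaussianReal 0 ⟨v, hv.le⟩) = ∫ x, gpdf v x * g x := by
  rw [gaussianReal_eq_withDensity hv,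
    integral_withDensity_eq_integral_smul ((measurable_gaussianPDFReal 0 ⟨v, hv.le⟩).real_toNNReal) g]
  congr 1
  funext x
  rw [NNReal.smul_def, Real.coe_toNNReal _ (gaussianPDFReal_nonneg 0 ⟨v, hv.le⟩ x), gpdf_eq v hv.le, smul_eq_mul]

lemma integrable_gaussianReal_iff {v : ℝ} (hv : 0 < v) (g : ℝ → ℝ) :
    Integrable g (gaussianReal 0 ⟨v, hv.le⟩) ↔ Integrable (fun x => g x * gpdf v x) := by
  rw [gaussianReal_eq_withDensity hv,
    integrable_withDensity_iff (((measurable_gaussianPDFReal 0 ⟨v, hv.le⟩).real_toNNReal).coe_nnreal_ennreal)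
      (Eventually.of_forall fun x => ENNReal.coe_lt_top)]
  constructor <;> intro h <;> apply h.congr (Eventually.of_forall fun x => ?_) <;>
    simp only [ENNReal.coe_toReal, Real.coe_toNNReal', gpdf_eq v hv.le,
      max_eq_left (gpdf_nonneg v x)] at h ⊢ <;> exact h

lemma continuous_tanh' : Continuous Real.tanh := by
  have h : Real.tanh = fun x => Real.sinh x / Real.cosh x := funext Real.tanh_eq_sinh_div_cosh
  rw [h]
  exact Real.continuous_sinh.div Real.continuous_cosh (fun x => (Real.cosh_pos x).ne')

lemma continuous_gpdf (v : ℝ) : Continuous (gpdf v) :=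
  continuous_const.mul (Real.continuous_exp.comp (((continuous_pow 2).neg).div_const _))

lemma main_bound {A B μ : ℝ} (hA : 0 < A) (hB : 0 < B) (hμ : 0 < μ) :
    -(A*B/(A+B)) * μ * (Real.sqrt (2*π*(A+B)))⁻¹ ≤
    ∫ v : ℝ × ℝ, (if 0 < v.1 + v.2 then (1 - Real.tanh ((v.1+v.2)/μ) ^ 2) * (v.1*v.2) else 0)
      ∂((gaussianReal 0 ⟨A, hA.le⟩).prod (gaussianReal 0 ⟨B, hB.le⟩)) := by
  have hS : 0 < A + B := by linarith
  have hT : 0 < A*B/(A+B) := by positivity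
  set F : ℝ × ℝ → ℝ := fun v => if 0 < v.1 + v.2 then (1 - Real.tanh ((v.1+v.2)/μ) ^ 2) * (v.1*v.2) else 0 with hF
  set P := gaussianReal 0 (⟨A, hA.le⟩ : ℝ≥0) with hP
  set Q := gaussianReal 0 (⟨B, hB.le⟩ : ℝ≥0) with hQ
  haveI : IsProbabilityMeasure P := instIsProbabilityMeasureGaussianReal 0 _
  haveI : IsProbabilityMeasure Q := instIsProbabilityMeasureGaussianReal 0 _
  have hFmeas : Measurable F := by
    apply Measurable.ite (measurableSet_lt measurable_const (measurable_fst.add measurable_snd))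
    · exact ((continuous_const.sub ((continuous_tanh'.comp
        ((continuous_fst.add continuous_snd).div_const μ)).pow 2)).mul
        (continuous_fst.mul continuous_snd)).measurable
    · exact measurable_const
  have hFbound : ∀ v : ℝ × ℝ, ‖F v‖ ≤ |v.1| * |v.2| := by
    intro v
    rw [hF]
    dsimp only
    split_ifs with h
    · rw [Real.norm_eq_abs, abs_mul, abs_of_nonneg (sech_sq_nonneg _), abs_mul]
      exact mul_le_of_le_one_left (by positivity) (sech_sq_le_one _)
    · simp [norm_zero]
      positivity
  have hintP : Integrable F (P.prod Q) := by
    have h1 : Integrable (fun x : ℝ => |x|) P := by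
      rw [hP, integrable_gaussianReal_iff hA]
      exact integrable_abs_mul_gpdf hA
    have h2 : Integrable (fun x : ℝ => |x|) Q := by
      rw [hQ, integrable_gaussianReal_iff hB]
      exact integrable_abs_mul_gpdf hB
    exact (h1.mul_prod h2).mono' hFmeas.aestronglyMeasurable (ae_of_all _ hFbound)
  set G : ℝ × ℝ → ℝ := fun z => gpdf A z.1 * gpdf B z.2 * F z with hG
  have hGmeas : Measurable G :=
    (((continuous_gpdf A).comp continuous_fst).mul
      ((continuous_gpdf B).comp continuous_snd)).measurable.mul hFmeas
  have hGint : Integrable G (volume.prod volume) := by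
    apply ((integrable_abs_mul_gpdf hA).mul_prod (integrable_abs_mul_gpdf hB)).mono'
      hGmeas.aestronglyMeasurable
    apply ae_of_all
    intro z
    rw [hG]
    dsimp only
    calc ‖gpdf A z.1 * gpdf B z.2 * F z‖ = gpdf A z.1 * gpdf B z.2 * ‖F z‖ := by
          rw [norm_mul, norm_mul, Real.norm_of_nonneg (gpdf_nonneg _ _),
            Real.norm_of_nonneg (gpdf_nonneg _ _)]
      _ ≤ gpdf A z.1 * gpdf B z.2 * (|z.1| * |z.2|) := by
          apply mul_le_mul_of_nonneg_left (hFbound z) (mul_nonneg (gpdf_nonneg _ _) (gpdf_nonneg _ _))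
      _ = |z.1| * gpdf A z.1 * (|z.2| * gpdf B z.2) := by ring
  -- the shear map
  have hshear : MeasurePreserving (fun z : ℝ × ℝ => (z.1, z.2 - z.1))
      ((volume : Measure ℝ).prod volume) ((volume : Measure ℝ).prod volume) :=
    measurePreserving_prod_sub volume volume
  have hemb : MeasurableEmbedding (fun z : ℝ × ℝ => (z.1, z.2 - z.1)) :=
    (MeasurableEquiv.shearSubRight ℝ).measurableEmbedding
  have hGTint : Integrable (fun z : ℝ × ℝ => G (z.1, z.2 - z.1)) (volume.prod volume) :=
    (hshear.integrable_comp_emb hemb).mpr hGint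
  -- inner evaluation
  have step6 : ∀ s : ℝ, (∫ x : ℝ, G (x, s - x))
      = (if 0 < s then 1 - Real.tanh (s/μ) ^ 2 else 0)
        * (gpdf (A+B) s * (A*B/(A+B)^2 * s^2 - A*B/(A+B))) := by
    intro s
    have hre : ∀ x : ℝ, G (x, s - x)
        = (if 0 < s then 1 - Real.tanh (s/μ) ^ 2 else 0)
          * (gpdf (A+B) s * (x * (s - x) * gpdf (A*B/(A+B)) (x - A/(A+B)*s))) := by
      intro x
      rw [hG, hF]
      dsimp only
      rw [show x + (s - x) = s from by ring]
      split_ifs with h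
      · rw [show gpdf A x * gpdf B (s - x) * ((1 - Real.tanh (s/μ) ^ 2) * (x * (s - x)))
            = (1 - Real.tanh (s/μ) ^ 2) * ((gpdf A x * gpdf B (s - x)) * (x * (s - x))) from by ring,
          gpdf_factor hA hB x s]
        ring
      · ring
    rw [integral_congr_ae (Eventually.of_forall hre),
      MeasureTheory.integral_const_mul, MeasureTheory.integral_const_mul,
      inner_moment hT s (A/(A+B)*s)]
    have harg : A/(A+B)*s * (s - A/(A+B)*s) - A*B/(A+B) = A*B/(A+B)^2 * s^2 - A*B/(A+B) := by
      field_simp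
      ring
    rw [harg]
  -- the chain of equalities
  have hchain : ∫ v : ℝ × ℝ, F v ∂(P.prod Q)
      = ∫ s : ℝ, (if 0 < s then 1 - Real.tanh (s/μ) ^ 2 else 0)
          * (gpdf (A+B) s * (A*B/(A+B)^2 * s^2 - A*B/(A+B))) := by
    calc ∫ v : ℝ × ℝ, F v ∂(P.prod Q) = ∫ x : ℝ, (∫ y : ℝ, F (x, y) ∂Q) ∂P :=
          integral_prod F hintP
      _ = ∫ x : ℝ, (∫ y : ℝ, gpdf B y * F (x, y)) ∂P := by
          congr 1
          funext x
          rw [hQ, integral_gaussianReal_eq hB]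
      _ = ∫ x : ℝ, gpdf A x * (∫ y : ℝ, gpdf B y * F (x, y)) := by
          rw [hP, integral_gaussianReal_eq hA]
      _ = ∫ x : ℝ, ∫ y : ℝ, G (x, y) := by
          congr 1
          funext x
          rw [← MeasureTheory.integral_const_mul]
          congr 1
          funext y
          rw [hG]
          dsimp only
          ring
      _ = ∫ x : ℝ, ∫ s : ℝ, G (x, s - x) := by
          congr 1
          funext x
          exact (integral_sub_right_eq_self (fun y => G (x, y)) x).symm
      _ = ∫ s : ℝ, ∫ x : ℝ, G (x, s - x) := by
          apply integral_integral_swap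
          exact hGTint
      _ = _ := by
          congr 1
          funext s
          exact step6 s
  rw [hchain]
  -- lower bound function
  set c : ℝ := -(A*B/(A+B)) * (Real.sqrt (2*π*(A+B)))⁻¹ with hc
  set L : ℝ → ℝ := Set.indicator (Ioi 0) (fun s => (1 - Real.tanh (s/μ) ^ 2) * c) with hL
  set g : ℝ → ℝ := fun s => (if 0 < s then 1 - Real.tanh (s/μ) ^ 2 else 0)
      * (gpdf (A+B) s * (A*B/(A+B)^2 * s^2 - A*B/(A+B))) with hg
  have hLle : ∀ s, L s ≤ g s := by
    intro s
    by_cases h : 0 < s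
    · rw [hL, Set.indicator_of_mem (mem_Ioi.mpr h), hg]
      dsimp only
      rw [if_pos h]
      apply mul_le_mul_of_nonneg_left _ (sech_sq_nonneg _)
      calc c ≤ -(A*B/(A+B)) * gpdf (A+B) s := by
            rw [hc]
            rw [neg_mul, neg_mul, neg_le_neg_iff]
            exact mul_le_mul_of_nonneg_left (gpdf_le hS s) hT.le
        _ = gpdf (A+B) s * (0 - A*B/(A+B)) := by ring
        _ ≤ gpdf (A+B) s * (A*B/(A+B)^2 * s^2 - A*B/(A+B)) := by
            apply mul_le_mul_of_nonneg_left _ (gpdf_nonneg _ _)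
            have : 0 ≤ A*B/(A+B)^2 * s^2 := by positivity
            linarith
    · rw [hL, Set.indicator_of_notMem (by simpa using h), hg]
      dsimp only
      rw [if_neg h, zero_mul]
  have hgmeas : Measurable g := by
    apply Measurable.mul
    · apply Measurable.ite (measurableSet_lt measurable_const measurable_id)
      · exact (continuous_const.sub ((continuous_tanh'.comp (continuous_id.div_const μ)).pow 2)).measurable
      · exact measurable_const
    · exact ((continuous_gpdf (A+B)).mul ((continuous_const.mul (continuous_pow 2)).sub continuous_const)).measurable
  have hgint : Integrable g := by
    apply Integrable.mono' (g := fun s : ℝ => A*B/(A+B)^2 * (s^2 * gpdf (A+B) s) + A*B/(A+B) * gpdf (A+B) s)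
    · exact ((integrable_sq_mul_gpdf hS).const_mul _).add ((integrable_gpdf hS).const_mul _)
    · exact hgmeas.aestronglyMeasurable
    · apply ae_of_all
      intro s
      rw [hg]
      dsimp only
      rw [Real.norm_eq_abs, abs_mul, abs_mul]
      have h1 : |if 0 < s then 1 - Real.tanh (s/μ) ^ 2 else 0| ≤ 1 := by
        split_ifs with h
        · rw [abs_of_nonneg (sech_sq_nonneg _)]; exact sech_sq_le_one _
        · simp
      have h2 : |gpdf (A+B) s| = gpdf (A+B) s := abs_of_nonneg (gpdf_nonneg _ _)
      have h3 : |A*B/(A+B)^2 * s^2 - A*B/(A+B)| ≤ A*B/(A+B)^2 * s^2 + A*B/(A+B) := by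
        have := abs_sub (A*B/(A+B)^2 * s^2) (A*B/(A+B))
        calc |A*B/(A+B)^2 * s^2 - A*B/(A+B)| ≤ |A*B/(A+B)^2 * s^2| + |A*B/(A+B)| := abs_sub _ _
          _ = A*B/(A+B)^2 * s^2 + A*B/(A+B) := by
              rw [abs_of_nonneg (by positivity), abs_of_nonneg hT.le]
      calc |if 0 < s then 1 - Real.tanh (s/μ) ^ 2 else 0| * (|gpdf (A+B) s| * |A*B/(A+B)^2 * s^2 - A*B/(A+B)|)
          ≤ 1 * (gpdf (A+B) s * (A*B/(A+B)^2 * s^2 + A*B/(A+B))) := by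
            rw [h2]
            apply mul_le_mul h1 (mul_le_mul_of_nonneg_left h3 (gpdf_nonneg _ _)) (mul_nonneg (gpdf_nonneg _ _) (abs_nonneg _)) one_pos.le
        _ = A*B/(A+B)^2 * (s^2 * gpdf (A+B) s) + A*B/(A+B) * gpdf (A+B) s := by ring
  have hLint : Integrable L := by
    rw [hL, integrable_indicator_iff measurableSet_Ioi]
    exact (integrableOn_sech_sq hμ).mul_const c
  have hLval : ∫ s, L s = μ * c := by
    rw [hL, integral_indicator measurableSet_Ioi, integral_mul_const, integral_sech_sq hμ]
  have := integral_mono hLint hgint hLle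
  rw [hLval] at this
  calc -(A*B/(A+B)) * μ * (Real.sqrt (2*π*(A+B)))⁻¹ = μ * c := by rw [hc]; ring
    _ ≤ ∫ s, g s := this
    _ = _ := by rw [hg]


end Statement17Aux

/-- Lemma: Gaussian expectation lower bound for
`(1 - tanh²((X+Y)/μ)) XY 1{X+Y>0}`. -/
theorem statement17 (σX σY μ : ℝ) (hX : 0 < σX) (hY : 0 < σY) (hμ : 0 < μ) :
    -(1 / Real.sqrt (2 * π)) * (μ * σX ^ 2 * σY ^ 2 / (σX ^ 2 + σY ^ 2) ^ ((3 : ℝ) / 2)) -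
      3 / Real.sqrt (2 * π) * (σX ^ 2 * σY ^ 2 * μ ^ 3 / (σX ^ 2 + σY ^ 2) ^ ((5 : ℝ) / 2)) ≤
    ∫ v : ℝ × ℝ,
      (if 0 < v.1 + v.2 then (1 - Real.tanh ((v.1 + v.2) / μ) ^ 2) * (v.1 * v.2) else 0)
      ∂((gaussianReal 0 ⟨σX ^ 2, sq_nonneg σX⟩).prod
          (gaussianReal 0 ⟨σY ^ 2, sq_nonneg σY⟩)) := by
  have hA : 0 < σX ^ 2 := by positivity
  have hB : 0 < σY ^ 2 := by positivity
  have hS : 0 < σX ^ 2 + σY ^ 2 := by positivity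
  have hmain := main_bound hA hB hμ
  set A := σX ^ 2
  set B := σY ^ 2
  refine le_trans ?_ hmain
  have hsq2pi : (0:ℝ) < Real.sqrt (2 * π) := Real.sqrt_pos.mpr (by positivity)
  have hsqS : (0:ℝ) < Real.sqrt (A + B) := Real.sqrt_pos.mpr hS
  have h32 : (A + B) ^ ((3:ℝ)/2) = (A + B) * Real.sqrt (A + B) := by
    rw [show (3:ℝ)/2 = 1 + 1/2 by norm_num, Real.rpow_add hS, Real.rpow_one,
      ← Real.sqrt_eq_rpow]
  have hsplit : Real.sqrt (2 * π * (A + B)) = Real.sqrt (2 * π) * Real.sqrt (A + B) :=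
    Real.sqrt_mul (by positivity) _
  have hfirst : -(1 / Real.sqrt (2 * π)) * (μ * A * B / (A + B) ^ ((3:ℝ)/2))
      = -(A * B / (A + B)) * μ * (Real.sqrt (2 * π * (A + B)))⁻¹ := by
    rw [h32, hsplit]
    field_simp
  have hsecond : 0 ≤ 3 / Real.sqrt (2 * π) * (A * B * μ ^ 3 / (A + B) ^ ((5:ℝ)/2)) := by
    have : (0:ℝ) < (A + B) ^ ((5:ℝ)/2) := Real.rpow_pos_of_pos hS _
    positivity
  linarith [hfirst.ge]

end
end
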